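/- arXiv:1105.5499 — 4 statements merged into one kernel-verified Lean document; each statement's English description precedes it below -/
import Mathlib

section
/- Let 1 ≤ p < 2. There exists a constant c > 0 such that for all N, n ∈ ℕ with 1 ≤ n ≤ N/4, the n-th Kolmogorov number of the identity map from ℓ_p^N to ℓ_∞^N satisfies d_n(id : ℓ_p^N → ℓ_∞^N) ≥ c · n^{-1/2}. -/
open scoped ENNReal BigOperators

/-- The ℓ_p quasi-norm on ℝ^N, for `p : ℝ≥0∞` (with `p = ∞` giving the sup-norm). -/
noncomputable def pNorm (p : ℝ≥0∞) {N : ℕ} (x : Fin N → ℝ) : ℝ :=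
  if p = ∞ then ⨆ i, |x i| else (∑ i, |x i| ^ p.toReal) ^ (1 / p.toReal)

/-- The n-th Kolmogorov number of the identity map `id : ℓ_p^N → ℓ_q^N`. -/
noncomputable def kolmogorovNumber (p q : ℝ≥0∞) (N n : ℕ) : ℝ :=
  sInf { r : ℝ | ∃ V : Submodule ℝ (Fin N → ℝ), Module.finrank ℝ (↥V) < n ∧
    r = sSup { s : ℝ | ∃ x : Fin N → ℝ, pNorm p x ≤ 1 ∧
      s = sInf { t : ℝ | ∃ v ∈ V, t = pNorm q (x - v) } } }

/-- The n-th Gelfand number of the identity map `id : ℓ_p^N → ℓ_q^N`. -/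
noncomputable def gelfandNumber (p q : ℝ≥0∞) (N n : ℕ) : ℝ :=
  sInf { r : ℝ | ∃ M : Submodule ℝ (Fin N → ℝ), N - Module.finrank ℝ (↥M) < n ∧
    r = sSup { s : ℝ | ∃ x ∈ M, pNorm p x ≤ 1 ∧ s = pNorm q x } }

/-- The n-th approximation number of the identity map `id : ℓ_p^N → ℓ_q^N`. -/
noncomputable def approxNumber (p q : ℝ≥0∞) (N n : ℕ) : ℝ :=
  sInf { r : ℝ | ∃ L : (Fin N → ℝ) →ₗ[ℝ] (Fin N → ℝ),
    Module.finrank ℝ (↥(LinearMap.range L)) < n ∧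
    r = sSup { s : ℝ | ∃ x : Fin N → ℝ, pNorm p x ≤ 1 ∧ s = pNorm q (x - L x) } }

section KolmogorovAux
open Module

lemma pNorm_top_eq {N : ℕ} (x : Fin N → ℝ) : pNorm ∞ x = ⨆ i, |x i| := if_pos rfl

lemma pNorm_top_nonneg {N : ℕ} (x : Fin N → ℝ) : 0 ≤ pNorm ∞ x := by
  rw [pNorm_top_eq]; exact Real.iSup_nonneg (fun i => abs_nonneg _)

lemma abs_le_pNorm_top {N : ℕ} (x : Fin N → ℝ) (i : Fin N) : |x i| ≤ pNorm ∞ x := by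
  rw [pNorm_top_eq]
  exact le_ciSup (f := fun j => |x j|) (Set.Finite.bddAbove (Set.finite_range _)) i

lemma pNorm_ofReal {p : ℝ} (hp : 0 < p) {N : ℕ} (x : Fin N → ℝ) :
    pNorm (ENNReal.ofReal p) x = (∑ i, |x i| ^ p) ^ (1/p) := by
  rw [pNorm, if_neg ENNReal.ofReal_ne_top, ENNReal.toReal_ofReal hp.le]

lemma pNorm_single {p : ℝ} (hp : 0 < p) {N : ℕ} (i : Fin N) :
    pNorm (ENNReal.ofReal p) (Pi.single i 1) = 1 := by
  classical
  rw [pNorm_ofReal hp]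
  have : ∀ j : Fin N, |(Pi.single i 1 : Fin N → ℝ) j| ^ p = if j = i then 1 else 0 := by
    intro j
    rw [Pi.single_apply]
    split_ifs with h
    · simp
    · simp [Real.zero_rpow hp.ne']
  rw [Finset.sum_congr rfl (fun j _ => this j)]
  simp [Real.one_rpow]

lemma pNorm_top_le_one {p : ℝ} (hp : 0 < p) {N : ℕ} {x : Fin N → ℝ}
    (hx : pNorm (ENNReal.ofReal p) x ≤ 1) : pNorm ∞ x ≤ 1 := by
  rw [pNorm_top_eq]
  rcases Nat.eq_zero_or_pos N with h | h
  · subst h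
    haveI : IsEmpty (Fin 0) := inferInstance
    rw [Real.iSup_of_isEmpty]; norm_num
  · haveI : Nonempty (Fin N) := Fin.pos_iff_nonempty.mp h
    apply ciSup_le
    intro i
    rw [pNorm_ofReal hp] at hx
    have h1 : |x i| ^ p ≤ ∑ j, |x j| ^ p :=
      Finset.single_le_sum (f := fun j => |x j| ^ p)
        (fun j _ => Real.rpow_nonneg (abs_nonneg _) p) (Finset.mem_univ i)
    have h2 : (|x i| ^ p) ^ (1/p) ≤ (∑ j, |x j| ^ p) ^ (1/p) :=
      Real.rpow_le_rpow (Real.rpow_nonneg (abs_nonneg _) p) h1 (by positivity)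
    have h3 : (|x i| ^ p) ^ (1/p) = |x i| := by
      rw [← Real.rpow_mul (abs_nonneg _), mul_one_div, div_self hp.ne', Real.rpow_one]
    rw [← h3]
    exact le_trans h2 hx

lemma eucl_norm_sq {m : ℕ} (y : EuclideanSpace ℝ (Fin m)) : ‖y‖^2 = ∑ j, (y j)^2 := by
  rw [EuclideanSpace.norm_eq, Real.sq_sqrt (by positivity)]
  simp [Real.norm_eq_abs, sq_abs]

lemma sum_proj_sq (m : ℕ) (W : Submodule ℝ (EuclideanSpace ℝ (Fin m))) :
    ∑ i : Fin m, ‖(W.orthogonalProjection (EuclideanSpace.single i 1) : EuclideanSpace ℝ (Fin m))‖^2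
      = (finrank ℝ W : ℝ) := by
  classical
  set E := EuclideanSpace ℝ (Fin m) with hE
  let b := stdOrthonormalBasis ℝ W
  have key : ∀ y : W, ‖(y : E)‖^2 = ∑ j, ((inner ℝ ((b j : W) : E) ((y : W) : E)) : ℝ)^2 := by
    intro y
    have h1 : ‖y‖ = ‖b.repr y‖ := (b.repr.norm_map y).symm
    have h2 : ‖(y:E)‖^2 = ∑ j, (b.repr y j)^2 := by
      rw [Submodule.norm_coe, h1, EuclideanSpace.norm_eq, Real.sq_sqrt (by positivity)]
      simp [Real.norm_eq_abs, sq_abs]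
    rw [h2]
    congr 1; ext j
    rw [b.repr_apply_apply]
    exact (Submodule.coe_inner W (b j) y) ▸ rfl
  have h1 : ∀ i : Fin m, ‖(W.orthogonalProjection (EuclideanSpace.single i 1) : E)‖^2
      = ∑ j, (((b j : W) : E) i)^2 := by
    intro i
    rw [key]
    congr 1; ext j
    have horth : (EuclideanSpace.single i 1 : E) - (W.orthogonalProjection (EuclideanSpace.single i 1) : E) ∈ Wᗮ :=
      W.sub_starProjection_mem_orthogonal _
    have h0 : (inner ℝ (((b j : W)) : E)
        ((EuclideanSpace.single i 1 : E) - (W.orthogonalProjection (EuclideanSpace.single i 1) : E)) : ℝ) = 0 :=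
      Submodule.inner_right_of_mem_orthogonal (b j).2 horth
    rw [inner_sub_right] at h0
    have : (inner ℝ (((b j : W)) : E) ((W.orthogonalProjection (EuclideanSpace.single i 1) : W) : E) : ℝ)
        = (inner ℝ (((b j : W)) : E) (EuclideanSpace.single i 1 : E) : ℝ) := by linarith
    rw [this, EuclideanSpace.inner_single_right]
    simp
  rw [Finset.sum_congr rfl (fun i _ => h1 i), Finset.sum_comm]
  have h2 : ∀ j, ∑ i, (((b j : W) : E) i)^2 = 1 := by
    intro j
    have hn1 : ‖((b j : W) : E)‖ = 1 := by rw [Submodule.norm_coe]; exact b.orthonormal.1 j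
    have := eucl_norm_sq ((b j : W) : E)
    rw [hn1] at this
    simpa using this.symm
  simp [h2]


lemma pyth_proj {m : ℕ} (W : Submodule ℝ (EuclideanSpace ℝ (Fin m)))
    (x : EuclideanSpace ℝ (Fin m)) :
    ‖x - (W.orthogonalProjection x : EuclideanSpace ℝ (Fin m))‖^2
      = ‖x‖^2 - ‖(W.orthogonalProjection x : EuclideanSpace ℝ (Fin m))‖^2 := by
  set P := (W.orthogonalProjection x : EuclideanSpace ℝ (Fin m)) with hP
  have horth : x - P ∈ Wᗮ := W.sub_starProjection_mem_orthogonal x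
  have h0 : (inner ℝ P (x - P) : ℝ) = 0 :=
    Submodule.inner_right_of_mem_orthogonal (W.orthogonalProjection x).2 horth
  have h1 : (inner ℝ (x - P) P : ℝ) = 0 := by rw [real_inner_comm]; exact h0
  have := norm_add_sq_real (x - P) P
  rw [sub_add_cancel, h1] at this
  linarith

lemma dist_ge_proj {m : ℕ} (W : Submodule ℝ (EuclideanSpace ℝ (Fin m)))
    (x : EuclideanSpace ℝ (Fin m)) {w : EuclideanSpace ℝ (Fin m)} (hw : w ∈ W) :
    ‖x - (W.orthogonalProjection x : EuclideanSpace ℝ (Fin m))‖^2 ≤ ‖x - w‖^2 := by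
  set P := (W.orthogonalProjection x : EuclideanSpace ℝ (Fin m)) with hP
  have horth : x - P ∈ Wᗮ := W.sub_starProjection_mem_orthogonal x
  have h0 : (inner ℝ (x - P) (P - w) : ℝ) = 0 := by
    rw [real_inner_comm]
    exact Submodule.inner_right_of_mem_orthogonal (Submodule.sub_mem W (W.orthogonalProjection x).2 hw) horth
  have := norm_add_sq_real (x - P) (P - w)
  rw [h0] at this
  have h2 : x - P + (P - w) = x - w := by abel
  rw [h2] at this
  nlinarith [sq_nonneg ‖P - w‖]

lemma exists_good (n : ℕ) (W : Submodule ℝ (EuclideanSpace ℝ (Fin (2*n))))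
    (hW : finrank ℝ W < n) :
    ∃ i : Fin (2*n), ∀ w ∈ W, (1:ℝ)/2 ≤ ‖EuclideanSpace.single i 1 - w‖^2 := by
  have hn : 0 < n := Nat.pos_of_ne_zero (by rintro rfl; exact Nat.not_lt_zero _ hW)
  by_contra hcon
  push_neg at hcon
  -- each projection distance is < 1/2
  have hlt : ∀ i : Fin (2*n),
      ‖EuclideanSpace.single i 1 -
        (W.orthogonalProjection (EuclideanSpace.single i 1) : EuclideanSpace ℝ (Fin (2*n)))‖^2 < 1/2 := by
    intro i
    obtain ⟨w, hw, hlt⟩ := hcon i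
    exact lt_of_le_of_lt (dist_ge_proj W _ hw) hlt
  have hsum : ∑ i : Fin (2*n), ‖EuclideanSpace.single i 1 -
      (W.orthogonalProjection (EuclideanSpace.single i 1) : EuclideanSpace ℝ (Fin (2*n)))‖^2
      = 2*n - (finrank ℝ W : ℝ) := by
    have : ∀ i : Fin (2*n), ‖EuclideanSpace.single i 1 -
        (W.orthogonalProjection (EuclideanSpace.single i 1) : EuclideanSpace ℝ (Fin (2*n)))‖^2
        = 1 - ‖(W.orthogonalProjection (EuclideanSpace.single i 1) : EuclideanSpace ℝ (Fin (2*n)))‖^2 := by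
      intro i
      rw [pyth_proj, EuclideanSpace.norm_single]
      norm_num
    rw [Finset.sum_congr rfl (fun i _ => this i), Finset.sum_sub_distrib, sum_proj_sq]
    simp [mul_comm]
  have hbig : ∑ i : Fin (2*n), ‖EuclideanSpace.single i 1 -
      (W.orthogonalProjection (EuclideanSpace.single i 1) : EuclideanSpace ℝ (Fin (2*n)))‖^2
      < ∑ _i : Fin (2*n), (1:ℝ)/2 := by
    apply Finset.sum_lt_sum_of_nonempty
    · haveI : Nonempty (Fin (2*n)) := Fin.pos_iff_nonempty.mp (by omega)
      exact Finset.univ_nonempty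
    · exact fun i _ => hlt i
  rw [hsum] at hbig
  simp only [Finset.sum_const, Finset.card_univ, Fintype.card_fin, nsmul_eq_mul] at hbig
  have hfr : (finrank ℝ W : ℝ) ≤ (n:ℝ) - 1 := by
    have : finrank ℝ W ≤ n - 1 := Nat.le_sub_one_of_lt hW
    have h2 := Nat.cast_le (α := ℝ) |>.mpr this
    push_cast [Nat.cast_sub hn] at h2 ⊢
    linarith
  push_cast at hbig
  linarith

noncomputable def projL (N m : ℕ) (h : m ≤ N) :
    (Fin N → ℝ) →ₗ[ℝ] EuclideanSpace ℝ (Fin m) :=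
  (WithLp.linearEquiv 2 ℝ (Fin m → ℝ)).symm.toLinearMap ∘ₗ
    LinearMap.funLeft ℝ ℝ (Fin.castLE h)

lemma projL_apply {N m : ℕ} (h : m ≤ N) (x : Fin N → ℝ) (j : Fin m) :
    projL N m h x j = x (Fin.castLE h j) := rfl


end KolmogorovAux

/-- For `1 ≤ p < 2` there is `c > 0` such that for all `1 ≤ n ≤ N/4`,
`d_n(id : ℓ_p^N → ℓ_∞^N) ≥ c · n^{-1/2}`. -/
theorem kolmogorov_lp_linfty_lower (p : ℝ) (hp1 : 1 ≤ p) (hp2 : p < 2) :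
    ∃ c : ℝ, 0 < c ∧ ∀ N n : ℕ, 1 ≤ n → (n : ℝ) ≤ (N : ℝ) / 4 →
      c * (n : ℝ) ^ (-(1/2) : ℝ) ≤ kolmogorovNumber (ENNReal.ofReal p) ∞ N n := by
  have hp0 : 0 < p := lt_of_lt_of_le one_pos hp1
  refine ⟨1/2, by norm_num, ?_⟩
  intro N n hn hnN
  have hn0 : (0:ℝ) < n := by exact_mod_cast hn
  have h4n : 4 * n ≤ N := by
    have h : ((4 * n : ℕ) : ℝ) ≤ (N : ℝ) := by push_cast; linarith
    exact_mod_cast h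
  have h2n : 2 * n ≤ N := by omega
  set b : ℝ := 1/2 * (n:ℝ) ^ (-(1/2) : ℝ) with hb
  have hb0 : 0 ≤ b := by positivity
  have hbsq : b^2 = 1/4 * ((n:ℝ))⁻¹ := by
    rw [hb, mul_pow, ← Real.rpow_natCast ((n:ℝ) ^ (-(1/2):ℝ)) 2,
      ← Real.rpow_mul (Nat.cast_nonneg n)]
    norm_num [Real.rpow_neg_one]
  rw [kolmogorovNumber]
  apply le_csInf
  · exact ⟨_, ⊥, by rw [finrank_bot]; exact hn, rfl⟩
  rintro r ⟨V, hV, rfl⟩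
  -- the subspace W in R^{2n}
  have hW : Module.finrank ℝ ↥(V.map (projL N (2*n) h2n)) < n :=
    lt_of_le_of_lt (Submodule.finrank_map_le _ _) hV
  obtain ⟨i, hi⟩ := exists_good n _ hW
  set x : Fin N → ℝ := Pi.single (Fin.castLE h2n i) 1 with hx
  have hproj : projL N (2*n) h2n x = EuclideanSpace.single i 1 := by
    ext j
    rw [projL_apply, EuclideanSpace.single_apply, hx, Pi.single_apply]
    simp [Fin.castLE_inj]
  have hxp : pNorm (ENNReal.ofReal p) x ≤ 1 := le_of_eq (pNorm_single hp0 _)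
  -- key geometric bound
  have hkey : ∀ v ∈ V, b ≤ pNorm ∞ (x - v) := by
    intro v hv
    set M := pNorm ∞ (x - v) with hM
    have hM0 : 0 ≤ M := pNorm_top_nonneg _
    have h12 : (1:ℝ)/2 ≤ ‖EuclideanSpace.single i 1 - projL N (2*n) h2n v‖^2 :=
      hi _ (Submodule.mem_map_of_mem hv)
    have hsub : EuclideanSpace.single i 1 - projL N (2*n) h2n v
        = projL N (2*n) h2n (x - v) := by rw [map_sub, hproj]
    rw [hsub, eucl_norm_sq] at h12
    have hterm : ∀ j : Fin (2*n), (projL N (2*n) h2n (x - v) j)^2 ≤ M^2 := by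
      intro j
      rw [projL_apply, ← sq_abs]
      exact pow_le_pow_left₀ (abs_nonneg _) (abs_le_pNorm_top (x - v) _) 2
    have hsumle : ∑ j : Fin (2*n), (projL N (2*n) h2n (x - v) j)^2
        ≤ (2*n : ℝ) * M^2 := by
      calc ∑ j : Fin (2*n), (projL N (2*n) h2n (x - v) j)^2
          ≤ ∑ _j : Fin (2*n), M^2 := Finset.sum_le_sum (fun j _ => hterm j)
        _ = (2*n : ℝ) * M^2 := by
            rw [Finset.sum_const, Finset.card_univ, Fintype.card_fin, nsmul_eq_mul]
            push_cast; ring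
    have hMsq : b^2 ≤ M^2 := by
      rw [hbsq]
      have h1 : (1:ℝ)/2 ≤ (2*n : ℝ) * M^2 := le_trans h12 hsumle
      have hninv : (n:ℝ) * (n:ℝ)⁻¹ = 1 := mul_inv_cancel₀ hn0.ne'
      nlinarith [mul_le_mul_of_nonneg_right h1 (inv_nonneg.mpr hn0.le), hninv]
    calc b = Real.sqrt (b^2) := (Real.sqrt_sq hb0).symm
      _ ≤ Real.sqrt (M^2) := Real.sqrt_le_sqrt hMsq
      _ = M := Real.sqrt_sq hM0
  -- conclude via sSup / sInf bookkeeping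
  have hmem : sInf { t : ℝ | ∃ v ∈ V, t = pNorm ∞ (x - v) }
      ∈ { s : ℝ | ∃ x : Fin N → ℝ, pNorm (ENNReal.ofReal p) x ≤ 1 ∧
        s = sInf { t : ℝ | ∃ v ∈ V, t = pNorm ∞ (x - v) } } := ⟨x, hxp, rfl⟩
  have hbdd : BddAbove { s : ℝ | ∃ x : Fin N → ℝ, pNorm (ENNReal.ofReal p) x ≤ 1 ∧
      s = sInf { t : ℝ | ∃ v ∈ V, t = pNorm ∞ (x - v) } } := by
    refine ⟨1, ?_⟩
    rintro s ⟨y, hy, rfl⟩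
    have h1 : pNorm ∞ (y - 0) ∈ { t : ℝ | ∃ v ∈ V, t = pNorm ∞ (y - v) } :=
      ⟨0, V.zero_mem, rfl⟩
    have h2 : sInf { t : ℝ | ∃ v ∈ V, t = pNorm ∞ (y - v) } ≤ pNorm ∞ (y - 0) :=
      csInf_le ⟨0, by rintro t ⟨v, hv, rfl⟩; exact pNorm_top_nonneg _⟩ h1
    rw [sub_zero] at h2
    exact le_trans h2 (pNorm_top_le_one hp0 hy)
  refine le_trans ?_ (le_csSup hbdd hmem)
  refine le_csInf ⟨pNorm ∞ (x - 0), 0, V.zero_mem, rfl⟩ ?_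
  rintro t ⟨v, hv, rfl⟩
  exact hkey v hv
end

section
/- Let 0 < p₁ < 1 and p₁ < p₂ ≤ ∞. Then for all N, n ∈ ℕ with n ≥ 1, the n-th Kolmogorov numbers satisfy d_n(id : ℓ_{p₁}^N → ℓ_{p₂}^N) = d_n(id : ℓ_{min(1,p₂)}^N → ℓ_{p₂}^N). -/
open scoped ENNReal BigOperators
open scoped Pointwise

lemma my_rpow_add_le {a b t : ℝ} (ha : 0 ≤ a) (hb : 0 ≤ b) (ht : 0 ≤ t) (ht1 : t ≤ 1) :
    (a + b) ^ t ≤ a ^ t + b ^ t := by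
  have h := NNReal.rpow_add_le_add_rpow a.toNNReal b.toNNReal ht ht1
  have h2 := NNReal.coe_le_coe.2 h
  push_cast at h2
  rwa [Real.coe_toNNReal _ ha, Real.coe_toNNReal _ hb] at h2

lemma my_add_rpow_le {a b t : ℝ} (ha : 0 ≤ a) (hb : 0 ≤ b) (ht1 : 1 ≤ t) :
    a ^ t + b ^ t ≤ (a + b) ^ t := by
  have h := NNReal.add_rpow_le_rpow_add a.toNNReal b.toNNReal ht1
  have h2 := NNReal.coe_le_coe.2 h
  push_cast at h2
  rwa [Real.coe_toNNReal _ ha, Real.coe_toNNReal _ hb] at h2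

lemma my_sum_rpow_le {ι : Type*} {s : Finset ι} {c : ι → ℝ} (hc : ∀ i ∈ s, 0 ≤ c i)
    {t : ℝ} (ht : 1 ≤ t) : ∑ i ∈ s, c i ^ t ≤ (∑ i ∈ s, c i) ^ t := by
  classical
  induction s using Finset.cons_induction with
  | empty => simp [Real.zero_rpow (by positivity : t ≠ 0)]
  | cons a s ha ih =>
      rw [Finset.sum_cons, Finset.sum_cons]
      have hca : 0 ≤ c a := hc a (Finset.mem_cons_self a s)
      have hsum : 0 ≤ ∑ i ∈ s, c i :=
        Finset.sum_nonneg fun i hi => hc i (Finset.mem_cons_of_mem hi)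
      calc c a ^ t + ∑ i ∈ s, c i ^ t
          ≤ c a ^ t + (∑ i ∈ s, c i) ^ t := by
            gcongr
            exact ih fun i hi => hc i (Finset.mem_cons_of_mem hi)
        _ ≤ (c a + ∑ i ∈ s, c i) ^ t := my_add_rpow_le hca hsum ht

section PNormLemmas

variable {N : ℕ}

lemma pNorm_nonneg (p : ℝ≥0∞) (x : Fin N → ℝ) : 0 ≤ pNorm p x := by
  unfold pNorm
  split
  · exact Real.iSup_nonneg fun i => abs_nonneg _
  · exact Real.rpow_nonneg (Finset.sum_nonneg fun i _ => Real.rpow_nonneg (abs_nonneg _) _) _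

lemma pNorm_eq_sum {p : ℝ≥0∞} (hp : p ≠ ∞) (x : Fin N → ℝ) :
    pNorm p x = (∑ i, |x i| ^ p.toReal) ^ (1 / p.toReal) := by
  unfold pNorm; rw [if_neg hp]

lemma pNorm_zero {p : ℝ≥0∞} (hp : p = ∞ ∨ 0 < p.toReal) : pNorm p (0 : Fin N → ℝ) = 0 := by
  unfold pNorm
  rcases hp with rfl | hp
  · rw [if_pos rfl]
    refine le_antisymm (Real.iSup_le (fun i => by simp) le_rfl)
      (Real.iSup_nonneg fun i => abs_nonneg _)
  · rw [if_neg (by rintro rfl; simp at hp)]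
    have h : ∀ i : Fin N, |(0 : Fin N → ℝ) i| ^ p.toReal = 0 := by
      intro i; simp [Real.zero_rpow hp.ne']
    rw [Finset.sum_congr rfl fun i _ => h i, Finset.sum_const, smul_zero,
      Real.zero_rpow (by positivity)]

lemma pNorm_smul {p : ℝ≥0∞} (hp : p = ∞ ∨ 0 < p.toReal) (c : ℝ) (x : Fin N → ℝ) :
    pNorm p (c • x) = |c| * pNorm p x := by
  unfold pNorm
  rcases hp with rfl | hp
  · rw [if_pos rfl, if_pos rfl]
    have h : ∀ i : Fin N, |(c • x) i| = |c| * |x i| := fun i => by simp [abs_mul]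
    simp_rw [h]
    exact (Real.mul_iSup_of_nonneg (abs_nonneg c) _).symm
  · have hpne : p ≠ ∞ := by rintro rfl; simp at hp
    rw [if_neg hpne, if_neg hpne]
    have h : ∀ i : Fin N, |(c • x) i| ^ p.toReal = |c| ^ p.toReal * |x i| ^ p.toReal := by
      intro i
      simp only [Pi.smul_apply, smul_eq_mul, abs_mul]
      exact Real.mul_rpow (abs_nonneg _) (abs_nonneg _)
    rw [Finset.sum_congr rfl fun i _ => h i, ← Finset.mul_sum,
      Real.mul_rpow (by positivity) (Finset.sum_nonneg fun i _ => by positivity),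
      ← Real.rpow_mul (abs_nonneg c), mul_one_div_cancel hp.ne', Real.rpow_one]

lemma pNorm_mono {a b : ℝ≥0∞} (ha : a ≠ ∞) (ha0 : 0 < a.toReal) (hab : a ≤ b)
    (x : Fin N → ℝ) : pNorm b x ≤ pNorm a x := by
  have hsum_nonneg : 0 ≤ ∑ i, |x i| ^ a.toReal := Finset.sum_nonneg fun i _ => by positivity
  rw [pNorm_eq_sum ha]
  rcases eq_or_ne b ∞ with rfl | hb
  · unfold pNorm
    rw [if_pos rfl]
    refine Real.iSup_le (fun i => ?_) (by positivity)
    have h1 : |x i| = (|x i| ^ a.toReal) ^ (1 / a.toReal) := by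
      rw [← Real.rpow_mul (abs_nonneg _), mul_one_div_cancel ha0.ne', Real.rpow_one]
    rw [h1]
    refine Real.rpow_le_rpow (by positivity) ?_ (by positivity)
    exact Finset.single_le_sum (f := fun j => |x j| ^ a.toReal)
      (fun j _ => by positivity) (Finset.mem_univ i)
  · have hs0 : 0 < b.toReal := lt_of_lt_of_le ha0 (ENNReal.toReal_mono hb hab)
    have hts : a.toReal ≤ b.toReal := ENNReal.toReal_mono hb hab
    rw [pNorm_eq_sum hb]
    have h1 : ∀ i : Fin N, |x i| ^ b.toReal = (|x i| ^ a.toReal) ^ (b.toReal / a.toReal) := by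
      intro i
      rw [← Real.rpow_mul (abs_nonneg _)]
      congr 1
      field_simp
    rw [Finset.sum_congr rfl fun i _ => h1 i]
    have h2 : ∑ i, (|x i| ^ a.toReal) ^ (b.toReal / a.toReal)
        ≤ (∑ i, |x i| ^ a.toReal) ^ (b.toReal / a.toReal) :=
      my_sum_rpow_le (fun i _ => by positivity) ((one_le_div ha0).2 hts)
    calc (∑ i, (|x i| ^ a.toReal) ^ (b.toReal / a.toReal)) ^ (1 / b.toReal)
        ≤ ((∑ i, |x i| ^ a.toReal) ^ (b.toReal / a.toReal)) ^ (1 / b.toReal) :=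
          Real.rpow_le_rpow (Finset.sum_nonneg fun i _ => by positivity) h2 (by positivity)
      _ = (∑ i, |x i| ^ a.toReal) ^ (1 / a.toReal) := by
          rw [← Real.rpow_mul hsum_nonneg]
          congr 1
          field_simp

lemma pNorm_triangle {p : ℝ≥0∞} (hp : 1 ≤ p) (x y : Fin N → ℝ) :
    pNorm p (x + y) ≤ pNorm p x + pNorm p y := by
  rcases eq_or_ne p ∞ with rfl | hpne
  · unfold pNorm
    rw [if_pos rfl, if_pos rfl, if_pos rfl]
    refine Real.iSup_le (fun i => ?_)
      (add_nonneg (Real.iSup_nonneg fun i => abs_nonneg _)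
        (Real.iSup_nonneg fun i => abs_nonneg _))
    calc |(x + y) i| ≤ |x i| + |y i| := by rw [Pi.add_apply]; exact abs_add_le _ _
      _ ≤ (⨆ j, |x j|) + ⨆ j, |y j| :=
          add_le_add
            (le_ciSup (f := fun j => |x j|) (Set.Finite.bddAbove (Set.finite_range _)) i)
            (le_ciSup (f := fun j => |y j|) (Set.Finite.bddAbove (Set.finite_range _)) i)
  · have h1 : 1 ≤ p.toReal := by
      rw [← ENNReal.toReal_one]
      exact ENNReal.toReal_mono hpne hp
    rw [pNorm_eq_sum hpne, pNorm_eq_sum hpne, pNorm_eq_sum hpne]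
    have := Real.Lp_add_le Finset.univ x y h1
    simpa using this

lemma pNorm_rpow_triangle {p : ℝ≥0∞} (hpne : p ≠ ∞) (hp0 : 0 < p.toReal)
    (hp1 : p.toReal ≤ 1) (x y : Fin N → ℝ) :
    pNorm p (x + y) ^ p.toReal ≤ pNorm p x ^ p.toReal + pNorm p y ^ p.toReal := by
  have key : ∀ z : Fin N → ℝ, pNorm p z ^ p.toReal = ∑ i, |z i| ^ p.toReal := by
    intro z
    rw [pNorm_eq_sum hpne, ← Real.rpow_mul (Finset.sum_nonneg fun i _ => by positivity),
      one_div_mul_cancel hp0.ne', Real.rpow_one]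
  rw [key, key, key, ← Finset.sum_add_distrib]
  refine Finset.sum_le_sum fun i _ => ?_
  calc |(x + y) i| ^ p.toReal ≤ (|x i| + |y i|) ^ p.toReal := by
        refine Real.rpow_le_rpow (abs_nonneg _) ?_ hp0.le
        rw [Pi.add_apply]; exact abs_add_le _ _
    _ ≤ |x i| ^ p.toReal + |y i| ^ p.toReal :=
        my_rpow_add_le (abs_nonneg _) (abs_nonneg _) hp0.le hp1

lemma pNorm_single_one {p : ℝ≥0∞} (hpne : p ≠ ∞) (hp0 : 0 < p.toReal) (i : Fin N) :
    pNorm p (Pi.single i (1 : ℝ)) = 1 := by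
  rw [pNorm_eq_sum hpne]
  have h : ∀ j : Fin N, |(Pi.single i (1 : ℝ) : Fin N → ℝ) j| ^ p.toReal = if j = i then 1 else 0 := by
    intro j
    rcases eq_or_ne j i with rfl | hj
    · simp
    · simp [Pi.single_eq_of_ne hj, Real.zero_rpow hp0.ne', if_neg hj]
  rw [Finset.sum_congr rfl fun j _ => h j, Finset.sum_ite_eq' Finset.univ i fun _ => (1 : ℝ)]
  simp

end PNormLemmas

section DistV

variable {N : ℕ}

noncomputable def distV (p : ℝ≥0∞) {N : ℕ} (V : Submodule ℝ (Fin N → ℝ)) (x : Fin N → ℝ) : ℝ :=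
  sInf {t : ℝ | ∃ v ∈ V, t = pNorm p (x - v)}

lemma distSet_nonempty (p : ℝ≥0∞) (V : Submodule ℝ (Fin N → ℝ)) (x : Fin N → ℝ) :
    {t : ℝ | ∃ v ∈ V, t = pNorm p (x - v)}.Nonempty :=
  ⟨pNorm p (x - 0), 0, V.zero_mem, rfl⟩

lemma distSet_bddBelow (p : ℝ≥0∞) (V : Submodule ℝ (Fin N → ℝ)) (x : Fin N → ℝ) :
    BddBelow {t : ℝ | ∃ v ∈ V, t = pNorm p (x - v)} :=
  ⟨0, by rintro t ⟨v, hv, rfl⟩; exact pNorm_nonneg _ _⟩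

lemma distV_nonneg (p : ℝ≥0∞) (V : Submodule ℝ (Fin N → ℝ)) (x : Fin N → ℝ) :
    0 ≤ distV p V x :=
  le_csInf (distSet_nonempty p V x) (by rintro t ⟨v, hv, rfl⟩; exact pNorm_nonneg _ _)

lemma distV_le (p : ℝ≥0∞) (V : Submodule ℝ (Fin N → ℝ)) (x : Fin N → ℝ) {v : Fin N → ℝ}
    (hv : v ∈ V) : distV p V x ≤ pNorm p (x - v) :=
  csInf_le (distSet_bddBelow p V x) ⟨v, hv, rfl⟩

lemma distV_le_pNorm (p : ℝ≥0∞) (V : Submodule ℝ (Fin N → ℝ)) (x : Fin N → ℝ) :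
    distV p V x ≤ pNorm p x := by
  have h := distV_le p V x V.zero_mem
  rwa [sub_zero] at h

lemma distV_zero {p : ℝ≥0∞} (hp : p = ∞ ∨ 0 < p.toReal) (V : Submodule ℝ (Fin N → ℝ)) :
    distV p V 0 = 0 := by
  refine le_antisymm ?_ (distV_nonneg p V 0)
  have h := distV_le_pNorm p V 0
  rwa [pNorm_zero hp] at h

lemma distV_smul {p : ℝ≥0∞} (hp : p = ∞ ∨ 0 < p.toReal) (V : Submodule ℝ (Fin N → ℝ))
    (c : ℝ) (x : Fin N → ℝ) : distV p V (c • x) = |c| * distV p V x := by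
  rcases eq_or_ne c 0 with rfl | hc
  · rw [zero_smul, distV_zero hp, abs_zero, zero_mul]
  · have hset : {t : ℝ | ∃ v ∈ V, t = pNorm p (c • x - v)}
        = |c| • {t : ℝ | ∃ v ∈ V, t = pNorm p (x - v)} := by
      ext t
      constructor
      · rintro ⟨v, hv, rfl⟩
        refine Set.mem_smul_set.2 ⟨pNorm p (x - c⁻¹ • v), ⟨c⁻¹ • v, V.smul_mem _ hv, rfl⟩, ?_⟩
        rw [smul_eq_mul, ← pNorm_smul hp, smul_sub, smul_inv_smul₀ hc]
      · intro ht
        obtain ⟨u, ⟨v, hv, rfl⟩, rfl⟩ := Set.mem_smul_set.1 ht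
        refine ⟨c • v, V.smul_mem _ hv, ?_⟩
        rw [smul_eq_mul, ← pNorm_smul hp, smul_sub]
    show sInf {t : ℝ | ∃ v ∈ V, t = pNorm p (c • x - v)} = _
    rw [hset, Real.sInf_smul_of_nonneg (abs_nonneg c), smul_eq_mul]
    rfl

lemma le_distV_rpow {p : ℝ≥0∞} {V : Submodule ℝ (Fin N → ℝ)} {y : Fin N → ℝ} {rr c : ℝ}
    (hrr : 0 < rr) (h : ∀ v ∈ V, c ≤ pNorm p (y - v) ^ rr) : c ≤ distV p V y ^ rr := by
  rcases le_or_gt c 0 with hc | hc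
  · exact hc.trans (Real.rpow_nonneg (distV_nonneg p V y) _)
  · have h1 : c ^ (1 / rr) ≤ distV p V y := by
      refine le_csInf (distSet_nonempty p V y) ?_
      rintro t ⟨v, hv, rfl⟩
      calc c ^ (1 / rr) ≤ (pNorm p (y - v) ^ rr) ^ (1 / rr) :=
            Real.rpow_le_rpow hc.le (h v hv) (by positivity)
        _ = pNorm p (y - v) := by
            rw [← Real.rpow_mul (pNorm_nonneg _ _), mul_one_div_cancel hrr.ne', Real.rpow_one]
    calc c = (c ^ (1 / rr)) ^ rr := by
          rw [← Real.rpow_mul hc.le, one_div_mul_cancel hrr.ne', Real.rpow_one]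
      _ ≤ distV p V y ^ rr := Real.rpow_le_rpow (by positivity) h1 hrr.le

lemma distV_rpow_add {p : ℝ≥0∞} {V : Submodule ℝ (Fin N → ℝ)} {rr : ℝ} (hrr : 0 < rr)
    (hK : ∀ x y : Fin N → ℝ, pNorm p (x + y) ^ rr ≤ pNorm p x ^ rr + pNorm p y ^ rr)
    (x y : Fin N → ℝ) :
    distV p V (x + y) ^ rr ≤ distV p V x ^ rr + distV p V y ^ rr := by
  have step1 : ∀ v ∈ V, distV p V (x + y) ^ rr - pNorm p (x - v) ^ rr ≤ distV p V y ^ rr := by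
    intro v hv
    apply le_distV_rpow hrr
    intro w hw
    have heq : (x + y) - (v + w) = (x - v) + (y - w) := by abel
    have hcalc : distV p V (x + y) ^ rr ≤ pNorm p (x - v) ^ rr + pNorm p (y - w) ^ rr := by
      calc distV p V (x + y) ^ rr ≤ pNorm p ((x + y) - (v + w)) ^ rr :=
            Real.rpow_le_rpow (distV_nonneg _ _ _) (distV_le p V (x + y) (V.add_mem hv hw)) hrr.le
        _ = pNorm p ((x - v) + (y - w)) ^ rr := by rw [heq]
        _ ≤ pNorm p (x - v) ^ rr + pNorm p (y - w) ^ rr := hK _ _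
    linarith
  have step2 : distV p V (x + y) ^ rr - distV p V y ^ rr ≤ distV p V x ^ rr := by
    apply le_distV_rpow hrr
    intro v hv
    have h := step1 v hv
    linarith
  linarith

end DistV

lemma key_sup_eq (p₁ : ℝ) (p₂ : ℝ≥0∞) (h1 : 0 < p₁) (h2 : p₁ < 1)
    (h3 : ENNReal.ofReal p₁ < p₂) {N : ℕ} (V : Submodule ℝ (Fin N → ℝ)) :
    sSup { s : ℝ | ∃ x : Fin N → ℝ, pNorm (ENNReal.ofReal p₁) x ≤ 1 ∧
        s = sInf { t : ℝ | ∃ v ∈ V, t = pNorm p₂ (x - v) } } =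
    sSup { s : ℝ | ∃ x : Fin N → ℝ, pNorm (min 1 p₂) x ≤ 1 ∧
        s = sInf { t : ℝ | ∃ v ∈ V, t = pNorm p₂ (x - v) } } := by
  have hdist : ∀ x : Fin N → ℝ,
      sInf { t : ℝ | ∃ v ∈ V, t = pNorm p₂ (x - v) } = distV p₂ V x := fun _ => rfl
  simp only [hdist]
  set q : ℝ≥0∞ := min 1 p₂ with hqdef
  have hp₁ne : ENNReal.ofReal p₁ ≠ ∞ := ENNReal.ofReal_ne_top
  have hp₁t : (ENNReal.ofReal p₁).toReal = p₁ := ENNReal.toReal_ofReal h1.le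
  have hp₁pos : 0 < (ENNReal.ofReal p₁).toReal := by rw [hp₁t]; exact h1
  have hq_ne : q ≠ ∞ := ne_top_of_le_ne_top ENNReal.one_ne_top (min_le_left _ _)
  have hle1 : ENNReal.ofReal p₁ ≤ q := le_min (ENNReal.ofReal_le_one.2 h2.le) h3.le
  have hrr_pos : 0 < q.toReal := by
    have := ENNReal.toReal_mono hq_ne hle1
    rw [hp₁t] at this
    exact lt_of_lt_of_le h1 this
  have hrr_le1 : q.toReal ≤ 1 := by
    have := ENNReal.toReal_mono ENNReal.one_ne_top (min_le_left 1 p₂)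
    simpa using this
  have hqp₂ : q ≤ p₂ := min_le_right _ _
  have hGoodp₂ : p₂ = ∞ ∨ 0 < p₂.toReal := by
    rcases eq_or_ne p₂ ∞ with rfl | h
    · exact Or.inl rfl
    · right
      have := (ENNReal.toReal_lt_toReal hp₁ne h).2 h3
      rw [hp₁t] at this
      exact lt_of_lt_of_le h1 this.le
  have hK : ∀ x y : Fin N → ℝ,
      pNorm p₂ (x + y) ^ q.toReal ≤ pNorm p₂ x ^ q.toReal + pNorm p₂ y ^ q.toReal := by
    rcases le_or_gt 1 p₂ with hp | hp
    · have hq1 : q.toReal = 1 := by rw [hqdef, min_eq_left hp]; simp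
      intro x y
      rw [hq1, Real.rpow_one, Real.rpow_one, Real.rpow_one]
      exact pNorm_triangle hp x y
    · have hq1 : q = p₂ := min_eq_right hp.le
      have hp₂ne : p₂ ≠ ∞ := by rintro rfl; exact absurd hp (by simp)
      have hp₂pos : 0 < p₂.toReal := hGoodp₂.resolve_left hp₂ne
      have hp₂le1 : p₂.toReal ≤ 1 := by
        have := ENNReal.toReal_mono ENNReal.one_ne_top hp.le
        simpa using this
      intro x y
      rw [hq1]
      exact pNorm_rpow_triangle hp₂ne hp₂pos hp₂le1 x y
  have hB_bdd : BddAbove { s : ℝ | ∃ x : Fin N → ℝ, pNorm (ENNReal.ofReal p₁) x ≤ 1 ∧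
      s = distV p₂ V x } := by
    refine ⟨1, ?_⟩
    rintro s ⟨x, hx, rfl⟩
    calc distV p₂ V x ≤ pNorm p₂ x := distV_le_pNorm _ _ _
      _ ≤ pNorm (ENNReal.ofReal p₁) x := pNorm_mono hp₁ne hp₁pos h3.le x
      _ ≤ 1 := hx
  have hA_bdd : BddAbove { s : ℝ | ∃ x : Fin N → ℝ, pNorm q x ≤ 1 ∧ s = distV p₂ V x } := by
    refine ⟨1, ?_⟩
    rintro s ⟨x, hx, rfl⟩
    calc distV p₂ V x ≤ pNorm p₂ x := distV_le_pNorm _ _ _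
      _ ≤ pNorm q x := pNorm_mono hq_ne hrr_pos hqp₂ x
      _ ≤ 1 := hx
  have hzeroB : (0 : ℝ) ∈ { s : ℝ | ∃ x : Fin N → ℝ, pNorm (ENNReal.ofReal p₁) x ≤ 1 ∧
      s = distV p₂ V x } :=
    ⟨0, by rw [pNorm_zero (Or.inr hp₁pos)]; norm_num, (distV_zero hGoodp₂ V).symm⟩
  have hzeroA : (0 : ℝ) ∈ { s : ℝ | ∃ x : Fin N → ℝ, pNorm q x ≤ 1 ∧ s = distV p₂ V x } :=
    ⟨0, by rw [pNorm_zero (Or.inr hrr_pos)]; norm_num, (distV_zero hGoodp₂ V).symm⟩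
  have hB_ne := Set.nonempty_of_mem hzeroB
  have hA_ne := Set.nonempty_of_mem hzeroA
  apply le_antisymm
  · refine csSup_le hB_ne ?_
    rintro s ⟨x, hx, rfl⟩
    refine le_csSup hA_bdd ⟨x, ?_, rfl⟩
    exact (pNorm_mono hp₁ne hp₁pos hle1 x).trans hx
  · refine csSup_le hA_ne ?_
    rintro s ⟨x, hx, rfl⟩
    set M := sSup { s : ℝ | ∃ x : Fin N → ℝ, pNorm (ENNReal.ofReal p₁) x ≤ 1 ∧
        s = distV p₂ V x } with hMdef
    have hM0 : 0 ≤ M := le_csSup hB_bdd hzeroB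
    -- bound on single coordinates
    have hsingle : ∀ i : Fin N,
        distV p₂ V (Pi.single i (x i)) ^ q.toReal ≤ |x i| ^ q.toReal * M ^ q.toReal := by
      intro i
      have hdec : (Pi.single i (x i) : Fin N → ℝ)
          = (x i) • (Pi.single i (1 : ℝ) : Fin N → ℝ) := by
        funext j
        by_cases hji : j = i
        · subst hji; simp
        · simp [Pi.single_eq_of_ne hji]
      have hei : distV p₂ V (Pi.single i (1 : ℝ)) ≤ M := by
        refine le_csSup hB_bdd ⟨Pi.single i (1 : ℝ), ?_, rfl⟩
        rw [pNorm_single_one hp₁ne hp₁pos]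
      rw [hdec, distV_smul hGoodp₂, Real.mul_rpow (abs_nonneg _) (distV_nonneg _ _ _)]
      exact mul_le_mul_of_nonneg_left
        (Real.rpow_le_rpow (distV_nonneg _ _ _) hei hrr_pos.le) (by positivity)
    have hsum1 : ∑ i, |x i| ^ q.toReal ≤ 1 := by
      have hx' : (∑ i, |x i| ^ q.toReal) ^ (1 / q.toReal) ≤ 1 := by
        rw [← pNorm_eq_sum hq_ne]; exact hx
      have h := Real.rpow_le_rpow (by positivity) hx' hrr_pos.le
      rwa [← Real.rpow_mul (Finset.sum_nonneg fun i _ => by positivity),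
        one_div_mul_cancel hrr_pos.ne', Real.rpow_one, Real.one_rpow] at h
    have hdecomp : x = ∑ i, Pi.single i (x i) := by
      funext j
      rw [Finset.sum_apply]
      exact (Fintype.sum_pi_single j x).symm
    have hmain : distV p₂ V x ^ q.toReal ≤ M ^ q.toReal := by
      calc distV p₂ V x ^ q.toReal
          = distV p₂ V (∑ i, Pi.single i (x i)) ^ q.toReal := by rw [← hdecomp]
        _ ≤ ∑ i, distV p₂ V (Pi.single i (x i)) ^ q.toReal :=
            Finset.le_sum_of_subadditive (fun y => distV p₂ V y ^ q.toReal)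
              (le_of_eq (by show distV p₂ V (0 : Fin N → ℝ) ^ q.toReal = 0
                            rw [distV_zero hGoodp₂, Real.zero_rpow hrr_pos.ne']))
              (distV_rpow_add hrr_pos hK) Finset.univ _
        _ ≤ ∑ i, |x i| ^ q.toReal * M ^ q.toReal := Finset.sum_le_sum fun i _ => hsingle i
        _ = (∑ i, |x i| ^ q.toReal) * M ^ q.toReal := by rw [← Finset.sum_mul]
        _ ≤ 1 * M ^ q.toReal := mul_le_mul_of_nonneg_right hsum1 (Real.rpow_nonneg hM0 _)
        _ = M ^ q.toReal := one_mul _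
    calc distV p₂ V x = (distV p₂ V x ^ q.toReal) ^ (1 / q.toReal) := by
          rw [← Real.rpow_mul (distV_nonneg _ _ _), mul_one_div_cancel hrr_pos.ne',
            Real.rpow_one]
      _ ≤ (M ^ q.toReal) ^ (1 / q.toReal) :=
          Real.rpow_le_rpow (Real.rpow_nonneg (distV_nonneg _ _ _) _) hmain (by positivity)
      _ = M := by
          rw [← Real.rpow_mul hM0, mul_one_div_cancel hrr_pos.ne', Real.rpow_one]

/-- For `0 < p₁ < 1` and `p₁ < p₂ ≤ ∞`,
`d_n(id : ℓ_{p₁}^N → ℓ_{p₂}^N) = d_n(id : ℓ_{min(1,p₂)}^N → ℓ_{p₂}^N)`. -/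
theorem kolmogorov_small_p_eq (p₁ : ℝ) (p₂ : ℝ≥0∞) (h1 : 0 < p₁) (h2 : p₁ < 1)
    (h3 : ENNReal.ofReal p₁ < p₂) :
    ∀ N n : ℕ, 1 ≤ n →
      kolmogorovNumber (ENNReal.ofReal p₁) p₂ N n =
        kolmogorovNumber (min 1 p₂) p₂ N n := by
  intro N n hn
  unfold kolmogorovNumber
  congr 1
  ext r
  simp only [Set.mem_setOf_eq]
  exact exists_congr fun V => and_congr_right fun _ => by
    rw [key_sup_eq p₁ p₂ h1 h2 h3 V]
end

section
/- Let 0 < p₁ ≤ 1 and 2 ≤ p₂ ≤ ∞. Then there exists a constant C > 0 such that for all n ∈ ℕ, the n-th Gelfand number of the identity map from ℓ_{p₁}^{2n} to ℓ_{p₂}^{2n} satisfies c_n(id : ℓ_{p₁}^{2n} → ℓ_{p₂}^{2n}) ≥ C · n^{1/2 − 1/p₁}. -/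
open scoped ENNReal BigOperators

lemma abs_le_pNorm {p : ℝ≥0∞} (hp : p ≠ ∞ → 0 < p.toReal) {N : ℕ} (x : Fin N → ℝ)
    (i : Fin N) : |x i| ≤ pNorm p x := by
  unfold pNorm
  split_ifs with h
  · exact le_ciSup (f := fun j => |x j|) (Set.Finite.bddAbove (Set.finite_range _)) i
  · have hr : 0 < p.toReal := hp h
    calc |x i| = (|x i| ^ p.toReal) ^ (1/p.toReal) := by
          rw [← Real.rpow_mul (abs_nonneg _), mul_one_div_cancel hr.ne', Real.rpow_one]
      _ ≤ (∑ j, |x j| ^ p.toReal) ^ (1/p.toReal) := by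
          apply Real.rpow_le_rpow (Real.rpow_nonneg (abs_nonneg _) _)
          · exact Finset.single_le_sum (f := fun j => |x j| ^ p.toReal)
              (fun j _ => Real.rpow_nonneg (abs_nonneg _) _) (Finset.mem_univ i)
          · positivity

lemma pNorm_le_card {p : ℝ≥0∞} (hp : 2 ≤ p) {N : ℕ} (hN : 1 ≤ N) (x : Fin N → ℝ)
    (hx : ∀ i, |x i| ≤ 1) : pNorm p x ≤ N := by
  have hN1 : (1:ℝ) ≤ N := by exact_mod_cast hN
  unfold pNorm
  split_ifs with h
  · have : Nonempty (Fin N) := ⟨⟨0, by omega⟩⟩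
    exact ciSup_le fun i => le_trans (hx i) hN1
  · have hp0 : p ≠ 0 := by
      intro h0; rw [h0] at hp; exact (by simp at hp)
    have hr : 0 < p.toReal := ENNReal.toReal_pos hp0 h
    calc (∑ i, |x i| ^ p.toReal) ^ (1/p.toReal)
        ≤ (∑ _i : Fin N, (1:ℝ)) ^ (1/p.toReal) := by
          apply Real.rpow_le_rpow (Finset.sum_nonneg fun i _ => Real.rpow_nonneg (abs_nonneg _) _)
          · exact Finset.sum_le_sum fun i _ =>
              Real.rpow_le_one (abs_nonneg _) (hx i) hr.le
          · positivity
      _ = (N:ℝ) ^ (1/p.toReal) := by simp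
      _ ≤ (N:ℝ) ^ (1:ℝ) := by
          apply Real.rpow_le_rpow_of_exponent_le hN1
          rw [div_le_one hr]
          have hr2 : (2:ℝ) ≤ p.toReal := by
            have := ENNReal.toReal_mono h hp
            simpa using this
          linarith
      _ = N := Real.rpow_one _

lemma exists_good_vector {N : ℕ} (M : Submodule ℝ (Fin N → ℝ))
    (hd : (N : ℝ) < 2 * Module.finrank ℝ M) :
    ∃ x : Fin N → ℝ, x ∈ M ∧ ∃ i₀ : Fin N,
      1/2 < x i₀ ∧ (∑ i, (x i)^2) ≤ 1 ∧ x i₀ = ∑ i, (x i)^2 := by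
  let e : EuclideanSpace ℝ (Fin N) ≃ₗ[ℝ] (Fin N → ℝ) := WithLp.linearEquiv 2 ℝ (Fin N → ℝ)
  let K : Submodule ℝ (EuclideanSpace ℝ (Fin N)) :=
    M.map (e.symm : (Fin N → ℝ) →ₗ[ℝ] EuclideanSpace ℝ (Fin N))
  have hK : Module.finrank ℝ K = Module.finrank ℝ M := LinearEquiv.finrank_map_eq _ _
  set d := Module.finrank ℝ K with hdd
  let b := stdOrthonormalBasis ℝ K
  let v : Fin d → (Fin N → ℝ) := fun j => e (b j : EuclideanSpace ℝ (Fin N))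
  have hvM : ∀ j, v j ∈ M := by
    intro j
    obtain ⟨m, hm, hme⟩ := (b j).2
    have : v j = m := by
      simp only [v, ← hme]
      exact e.apply_symm_apply m
    rwa [this]
  have horth : ∀ j k, (∑ i, v j i * v k i) = if j = k then (1:ℝ) else 0 := by
    intro j k
    have h := orthonormal_iff_ite.mp b.orthonormal j k
    simp [Submodule.coe_inner, PiLp.inner_apply, RCLike.inner_apply, v,
      WithLp.linearEquiv_apply, e] at h ⊢
    rw [← h]
    exact Finset.sum_congr rfl fun _ _ => mul_comm _ _
  have htot : (∑ i, ∑ j, (v j i)^2) = (d : ℝ) := by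
    rw [Finset.sum_comm]
    have h1 : ∀ j : Fin d, (∑ i, (v j i)^2) = 1 := by
      intro j
      have := horth j j
      simpa [sq] using this
    simp [h1]
  have hex : ∃ i₀ : Fin N, 1/2 < ∑ j, (v j i₀)^2 := by
    by_contra h
    push_neg at h
    have hle : (∑ i : Fin N, ∑ j, (v j i)^2) ≤ ∑ _i : Fin N, (1/2 : ℝ) :=
      Finset.sum_le_sum fun i _ => h i
    rw [htot] at hle
    simp [Finset.sum_const, Finset.card_univ] at hle
    rw [hK] at hle
    linarith
  obtain ⟨i₀, hi₀⟩ := hex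
  let c : Fin d → ℝ := fun j => v j i₀
  refine ⟨∑ j, c j • v j, Submodule.sum_mem M fun j _ => Submodule.smul_mem M _ (hvM j), i₀, ?_⟩
  set x : Fin N → ℝ := ∑ j, c j • v j with hx
  have hxapp : ∀ i, x i = ∑ j, c j * v j i := by
    intro i; simp [hx, Finset.sum_apply]
  have hxi₀ : x i₀ = ∑ j, (c j)^2 := by
    rw [hxapp]; exact Finset.sum_congr rfl fun j _ => by simp [c, sq]
  have hx2 : (∑ i, (x i)^2) = ∑ j, (c j)^2 := by
    have hsq : ∀ i, (x i)^2 = ∑ j, ∑ k, (c j * c k) * (v j i * v k i) := by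
      intro i
      rw [hxapp, sq, Finset.sum_mul_sum]
      exact Finset.sum_congr rfl fun j _ => Finset.sum_congr rfl fun k _ => by ring
    calc ∑ i, (x i)^2 = ∑ i : Fin N, ∑ j, ∑ k, (c j * c k) * (v j i * v k i) :=
          Finset.sum_congr rfl fun i _ => hsq i
      _ = ∑ j, ∑ k, (c j * c k) * (∑ i, v j i * v k i) := by
          rw [Finset.sum_comm]
          refine Finset.sum_congr rfl fun j _ => ?_
          rw [Finset.sum_comm]
          refine Finset.sum_congr rfl fun k _ => ?_
          rw [Finset.mul_sum]
      _ = ∑ j, (c j)^2 := by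
          refine Finset.sum_congr rfl fun j _ => ?_
          simp [horth, sq]
  have ht : 1/2 < x i₀ := by rw [hxi₀]; simpa [c] using hi₀
  refine ⟨ht, ?_, by rw [hxi₀, hx2]⟩
  have h1 : (x i₀)^2 ≤ ∑ i, (x i)^2 :=
    Finset.single_le_sum (f := fun i => (x i)^2) (fun i _ => sq_nonneg _) (Finset.mem_univ i₀)
  rw [hx2] at h1 ⊢
  rw [hxi₀] at ht
  nlinarith

/-- For `0 < p₁ ≤ 1` and `2 ≤ p₂ ≤ ∞` there is `C > 0` with
`c_n(id : ℓ_{p₁}^{2n} → ℓ_{p₂}^{2n}) ≥ C·n^{1/2 - 1/p₁}` for all `n`. -/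
theorem gelfand_lower_large_p2 (p₁ : ℝ) (p₂ : ℝ≥0∞) (h1 : 0 < p₁) (h2 : p₁ ≤ 1)
    (h3 : 2 ≤ p₂) :
    ∃ C : ℝ, 0 < C ∧ ∀ n : ℕ,
      C * (n : ℝ) ^ (1/2 - 1/p₁) ≤ gelfandNumber (ENNReal.ofReal p₁) p₂ (2 * n) n := by
  have hq₁ : (ENNReal.ofReal p₁) ≠ ∞ := ENNReal.ofReal_ne_top
  have hq₁t : (ENNReal.ofReal p₁).toReal = p₁ := ENNReal.toReal_ofReal h1.le
  have hp₁inv : (1:ℝ) ≤ 1/p₁ := by rw [le_div_iff₀ h1]; linarith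
  have hp2ne0 : p₂ ≠ 0 := by
    intro h0; rw [h0] at h3; simp at h3
  refine ⟨(2:ℝ) ^ ((1/2 - 1/p₁ : ℝ) - 1), Real.rpow_pos_of_pos two_pos _, fun n => ?_⟩
  rcases Nat.eq_zero_or_pos n with rfl | hn
  · have hexp : (1/2 - 1/p₁ : ℝ) ≠ 0 := by
      intro h; linarith
    rw [Nat.cast_zero, Real.zero_rpow hexp, mul_zero]
    unfold gelfandNumber
    have hempty : { r : ℝ | ∃ M : Submodule ℝ (Fin (2*0) → ℝ),
        2*0 - Module.finrank ℝ (↥M) < 0 ∧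
        r = sSup { s : ℝ | ∃ x ∈ M, pNorm (ENNReal.ofReal p₁) x ≤ 1 ∧ s = pNorm p₂ x } } = ∅ := by
      ext r; simp
    rw [hempty, Real.sInf_empty]
  · unfold gelfandNumber
    have hN1 : 1 ≤ 2 * n := by omega
    have hNR : (0:ℝ) < (2*n : ℕ) := by positivity
    apply le_csInf
    · refine ⟨_, ⟨⊤, ?_, rfl⟩⟩
      have htr : Module.finrank ℝ (⊤ : Submodule ℝ (Fin (2*n) → ℝ)) = 2*n := by
        simp [Module.finrank_fin_fun]
      omega
    rintro r ⟨M, hM, rfl⟩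
    have hfr : n < Module.finrank ℝ M := by
      have hle : Module.finrank ℝ M ≤ 2*n := by
        have := Submodule.finrank_le M
        rwa [Module.finrank_fin_fun] at this
      omega
    obtain ⟨x, hxM, i₀, hxi₀, hx2, hxeq⟩ := exists_good_vector M (by
      have : 2 * n < 2 * Module.finrank ℝ M := by omega
      exact_mod_cast this)
    set S₁ := ∑ i, |x i| ^ p₁ with hS₁
    have hS₁nonneg : 0 ≤ S₁ := Finset.sum_nonneg fun i _ => Real.rpow_nonneg (abs_nonneg _) _
    have key := Real.arith_mean_le_rpow_mean (Finset.univ (α := Fin (2*n)))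
      (fun _ => ((2*n : ℕ):ℝ)⁻¹) (fun i => |x i| ^ p₁)
      (fun i _ => by positivity)
      (by rw [Finset.sum_const, Finset.card_univ, Fintype.card_fin, nsmul_eq_mul,
            mul_inv_cancel₀ hNR.ne'])
      (fun i _ => Real.rpow_nonneg (abs_nonneg _) _)
      (p := 2/p₁) (by rw [le_div_iff₀ h1]; linarith)
    have hzp : ∀ i : Fin (2*n), (|x i| ^ p₁) ^ (2/p₁ : ℝ) = (x i)^2 := by
      intro i
      rw [← Real.rpow_mul (abs_nonneg _)]
      have hh : p₁ * (2/p₁) = 2 := by field_simp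
      rw [hh]
      rw [show ((2:ℝ) : ℝ) = ((2:ℕ):ℝ) by norm_num, Real.rpow_natCast, sq_abs]
    have hkey2 : ((2*n:ℕ):ℝ)⁻¹ * S₁ ≤ (((2*n:ℕ):ℝ)⁻¹) ^ (p₁/2 : ℝ) := by
      rw [one_div_div] at key
      have hL : ∑ i, ((2*n:ℕ):ℝ)⁻¹ * |x i| ^ p₁ = ((2*n:ℕ):ℝ)⁻¹ * S₁ := by
        rw [hS₁, Finset.mul_sum]
      have hR : ∑ i, ((2*n:ℕ):ℝ)⁻¹ * ((|x i| ^ p₁) ^ (2/p₁ : ℝ))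
          = ((2*n:ℕ):ℝ)⁻¹ * ∑ i, (x i)^2 := by
        simp_rw [hzp]; rw [Finset.mul_sum]
      rw [hL, hR] at key
      refine le_trans key ?_
      apply Real.rpow_le_rpow (by positivity) ?_ (by positivity)
      calc ((2*n:ℕ):ℝ)⁻¹ * ∑ i, (x i)^2 ≤ ((2*n:ℕ):ℝ)⁻¹ * 1 :=
            mul_le_mul_of_nonneg_left hx2 (by positivity)
        _ = ((2*n:ℕ):ℝ)⁻¹ := mul_one _
    have hS₁le : S₁ ≤ ((2*n:ℕ):ℝ) ^ (1 - p₁/2 : ℝ) := by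
      calc S₁ = ((2*n:ℕ):ℝ) * (((2*n:ℕ):ℝ)⁻¹ * S₁) := by field_simp
        _ ≤ ((2*n:ℕ):ℝ) * (((2*n:ℕ):ℝ)⁻¹) ^ (p₁/2 : ℝ) :=
            mul_le_mul_of_nonneg_left hkey2 hNR.le
        _ = ((2*n:ℕ):ℝ) ^ (1 - p₁/2 : ℝ) := by
            rw [Real.inv_rpow hNR.le, ← Real.rpow_neg hNR.le]
            nth_rewrite 1 [← Real.rpow_one ((2*n:ℕ):ℝ)]
            rw [← Real.rpow_add hNR]
            ring_nf
    set P := pNorm (ENNReal.ofReal p₁) x with hPset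
    have hPdef : P = S₁ ^ (1/p₁ : ℝ) := by
      rw [hPset]; unfold pNorm; rw [if_neg hq₁, hq₁t]
    have hPA : P ≤ ((2*n:ℕ):ℝ) ^ (1/p₁ - 1/2 : ℝ) := by
      rw [hPdef]
      calc S₁ ^ (1/p₁:ℝ) ≤ (((2*n:ℕ):ℝ) ^ (1 - p₁/2:ℝ)) ^ (1/p₁:ℝ) :=
            Real.rpow_le_rpow hS₁nonneg hS₁le (one_div_pos.mpr h1).le
        _ = ((2*n:ℕ):ℝ) ^ (1/p₁ - 1/2 : ℝ) := by
            rw [← Real.rpow_mul hNR.le]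
            congr 1
            field_simp
    have hPpos : 0 < P := by
      have h := abs_le_pNorm (p := ENNReal.ofReal p₁) (fun _ => by rw [hq₁t]; exact h1) x i₀
      rw [← hPset] at h
      have : (0:ℝ) < |x i₀| := by
        have := le_abs_self (x i₀); linarith
      linarith
    have hzM : P⁻¹ • x ∈ M := Submodule.smul_mem M _ hxM
    have hz1 : pNorm (ENNReal.ofReal p₁) (P⁻¹ • x) = 1 := by
      unfold pNorm
      rw [if_neg hq₁, hq₁t]
      have habs : ∀ i : Fin (2*n), |(P⁻¹ • x) i| ^ p₁ = (P⁻¹) ^ p₁ * |x i| ^ p₁ := by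
        intro i
        rw [Pi.smul_apply, smul_eq_mul, abs_mul, abs_of_pos (inv_pos.mpr hPpos),
          Real.mul_rpow (inv_pos.mpr hPpos).le (abs_nonneg _)]
      simp_rw [habs]
      rw [← Finset.mul_sum, ← hS₁,
        Real.mul_rpow (Real.rpow_nonneg (inv_pos.mpr hPpos).le _) hS₁nonneg,
        ← Real.rpow_mul (inv_pos.mpr hPpos).le, mul_one_div_cancel h1.ne', Real.rpow_one,
        ← hPdef]
      exact inv_mul_cancel₀ hPpos.ne'
    have hzlow : (1/2 : ℝ) * ((2*n:ℕ):ℝ) ^ ((1/2 : ℝ) - 1/p₁) ≤ pNorm p₂ (P⁻¹ • x) := by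
      have habs : |(P⁻¹ • x) i₀| ≤ pNorm p₂ (P⁻¹ • x) :=
        abs_le_pNorm (fun hne => ENNReal.toReal_pos hp2ne0 hne) _ i₀
      have hcoord : (P⁻¹ • x) i₀ = P⁻¹ * x i₀ := rfl
      have hinv : (((2*n:ℕ):ℝ) ^ (1/p₁ - 1/2 : ℝ))⁻¹ ≤ P⁻¹ :=
        inv_anti₀ hPpos hPA
      have hAinv : (((2*n:ℕ):ℝ) ^ (1/p₁ - 1/2 : ℝ))⁻¹ = ((2*n:ℕ):ℝ) ^ ((1/2:ℝ) - 1/p₁) := by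
        rw [← Real.rpow_neg hNR.le]
        norm_num
      have hle1 : (1/2 : ℝ) * ((2*n:ℕ):ℝ) ^ ((1/2 : ℝ) - 1/p₁) ≤ P⁻¹ * x i₀ := by
        rw [← hAinv]
        have h1' : (1/2 : ℝ) * (((2*n:ℕ):ℝ) ^ (1/p₁ - 1/2 : ℝ))⁻¹
            ≤ (1/2 : ℝ) * P⁻¹ := by
          apply mul_le_mul_of_nonneg_left hinv (by norm_num)
        refine le_trans h1' ?_
        rw [mul_comm]
        apply mul_le_mul_of_nonneg_left (le_of_lt hxi₀) (inv_pos.mpr hPpos).le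
      calc (1/2 : ℝ) * ((2*n:ℕ):ℝ) ^ ((1/2 : ℝ) - 1/p₁) ≤ P⁻¹ * x i₀ := hle1
        _ ≤ |(P⁻¹ • x) i₀| := by rw [hcoord]; exact le_abs_self _
        _ ≤ pNorm p₂ (P⁻¹ • x) := habs
    have hbdd : BddAbove {s : ℝ | ∃ y ∈ M, pNorm (ENNReal.ofReal p₁) y ≤ 1 ∧ s = pNorm p₂ y} := by
      refine ⟨((2*n:ℕ):ℝ), ?_⟩
      rintro s ⟨y, hyM, hy1, rfl⟩
      apply pNorm_le_card h3 hN1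
      intro i
      exact le_trans (abs_le_pNorm (fun _ => by rw [hq₁t]; exact h1) y i) hy1
    have hmem : pNorm p₂ (P⁻¹ • x) ∈
        {s : ℝ | ∃ y ∈ M, pNorm (ENNReal.ofReal p₁) y ≤ 1 ∧ s = pNorm p₂ y} :=
      ⟨P⁻¹ • x, hzM, le_of_eq hz1, rfl⟩
    have harith : (2:ℝ) ^ ((1/2 - 1/p₁ : ℝ) - 1) * (n:ℝ) ^ (1/2 - 1/p₁ : ℝ)
        = (1/2 : ℝ) * ((2*n:ℕ):ℝ) ^ ((1/2 : ℝ) - 1/p₁) := by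
      have hcast : ((2*n:ℕ):ℝ) = 2 * (n:ℝ) := by push_cast; ring
      rw [hcast, Real.mul_rpow (by norm_num) (Nat.cast_nonneg n),
        Real.rpow_sub two_pos, Real.rpow_one]
      ring
    calc (2:ℝ) ^ ((1/2 - 1/p₁ : ℝ) - 1) * (n:ℝ) ^ (1/2 - 1/p₁ : ℝ)
        = (1/2 : ℝ) * ((2*n:ℕ):ℝ) ^ ((1/2 : ℝ) - 1/p₁) := harith
      _ ≤ pNorm p₂ (P⁻¹ • x) := hzlow
      _ ≤ sSup {s : ℝ | ∃ y ∈ M, pNorm (ENNReal.ofReal p₁) y ≤ 1 ∧ s = pNorm p₂ y} :=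
          le_csSup hbdd hmem
end

section
/- Let 0 < p ≤ 1 and 0 < λ < 1. Then there exists a constant C_λ > 0 depending only on λ such that for all N, n ∈ ℕ, the n-th approximation number of the identity map from ℓ_p^N to ℓ_∞^N satisfies: a_n(id : ℓ_p^N → ℓ_∞^N) ≤ 1 if n ≤ N^λ; a_n(id : ℓ_p^N → ℓ_∞^N) ≤ C_λ · n^{-1/2} if N^λ < n ≤ N; and a_n(id : ℓ_p^N → ℓ_∞^N) = 0 if n > N. -/
set_option linter.unusedSectionVars false

open scoped ENNReal BigOperators

section CharacterSums
variable {F : Type*} [Field F] [Fintype F] [DecidableEq F] [CharP F 2]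

/-- absolute trace-like map (sum of Frobenius iterates). -/
noncomputable def trF (m : ℕ) (x : F) : F := ∑ i ∈ Finset.range m, x ^ 2 ^ i

/-- quadratic character-like sign. -/
noncomputable def psiF (m : ℕ) (x : F) : ℝ := if trF m x = 0 then 1 else -1

theorem trF_add (m : ℕ) (x y : F) : trF m (x + y) = trF m x + trF m y := by
  simp only [trF, ← Finset.sum_add_distrib]
  exact Finset.sum_congr rfl fun i _ => add_pow_char_pow ..

theorem pow_card_eq (m : ℕ) (hcard : Fintype.card F = 2 ^ m) (x : F) : x ^ 2 ^ m = x := by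
  rw [← hcard]; exact FiniteField.pow_card x

theorem trF_frob (m : ℕ) (hcard : Fintype.card F = 2 ^ m) (x : F) :
    trF m (x ^ 2) = trF m x := by
  have key : ∀ i : ℕ, (x ^ 2) ^ 2 ^ i = x ^ 2 ^ (i + 1) := by
    intro i
    rw [← pow_mul, pow_succ, mul_comm (2 ^ i) 2]
  have h1 : x + trF m (x ^ 2) = ∑ i ∈ Finset.range (m + 1), x ^ 2 ^ i := by
    rw [Finset.sum_range_succ' (fun i => x ^ 2 ^ i) m]
    simp only [trF, key, pow_zero, pow_one]
    ring
  have h2 : ∑ i ∈ Finset.range (m + 1), x ^ 2 ^ i = trF m x + x := by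
    rw [Finset.sum_range_succ, pow_card_eq m hcard, trF]
  have := h1.trans h2
  -- x + A = B + x  ⟹  A = B
  have : trF m (x ^ 2) + x = trF m x + x := by rw [← this]; ring
  exact add_right_cancel this

theorem trF_pow_shift (m : ℕ) (hcard : Fintype.card F = 2 ^ m) (k : ℕ) (x : F) :
    trF m (x ^ 2 ^ k) = trF m x := by
  induction k with
  | zero => simp
  | succ k ih =>
      have : x ^ 2 ^ (k + 1) = (x ^ 2 ^ k) ^ 2 := by
        rw [← pow_mul, pow_succ]
      rw [this, trF_frob m hcard, ih]

theorem trF_zero_one (m : ℕ) (hcard : Fintype.card F = 2 ^ m) (x : F) :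
    trF m x = 0 ∨ trF m x = 1 := by
  have hsq : (trF m x) ^ 2 = trF m x := by
    have step : (trF m x) ^ 2 = trF m (x ^ 2) := by
      have h := map_sum (frobenius F 2) (fun i => x ^ 2 ^ i) (Finset.range m)
      simp only [frobenius_def] at h
      simp only [trF]
      rw [h]
      exact Finset.sum_congr rfl fun i _ => by rw [← pow_mul, ← pow_mul, mul_comm]
    rw [step, trF_frob m hcard]
  have hz : trF m x * (trF m x - 1) = 0 := by linear_combination hsq
  rcases mul_eq_zero.mp hz with h | h
  · exact Or.inl h
  · exact Or.inr (sub_eq_zero.mp h)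

theorem trF_zero (m : ℕ) : trF m (0 : F) = 0 := by
  simp [trF]

theorem psiF_zero (m : ℕ) : psiF m (0 : F) = 1 := by
  simp [psiF, trF_zero]

theorem psiF_add (m : ℕ) (hcard : Fintype.card F = 2 ^ m) (x y : F) :
    psiF m (x + y) = psiF m x * psiF m y := by
  have hx := trF_zero_one m hcard x
  have hy := trF_zero_one m hcard y
  have hxy : trF m (x + y) = trF m x + trF m y := trF_add m x y
  rcases hx with hx | hx <;> rcases hy with hy | hy <;>
    simp [psiF, hxy, hx, hy, one_ne_zero, CharTwo.add_self_eq_zero]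

theorem psiF_le_one (m : ℕ) (x : F) : psiF m x ≤ 1 := by
  unfold psiF; split <;> norm_num

theorem psiF_abs (m : ℕ) (x : F) : |psiF m x| = 1 := by
  unfold psiF; split <;> norm_num

theorem psiF_congr (m : ℕ) {u v : F} (h : trF m u = trF m v) : psiF m u = psiF m v := by
  unfold psiF; rw [h]

theorem exists_tr_ne (m : ℕ) (hm : m ≠ 0) (hcard : Fintype.card F = 2 ^ m) {b : F}
    (hb : b ≠ 0) : ∃ x₀ : F, trF m (b * x₀) ≠ 0 := by
  by_contra h
  push_neg at h
  set T : Polynomial F := ∑ i ∈ Finset.range m, Polynomial.C (b ^ 2 ^ i) * Polynomial.X ^ 2 ^ i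
    with hT
  have heval : ∀ x : F, T.eval x = trF m (b * x) := by
    intro x
    simp [hT, Polynomial.eval_finset_sum, trF, mul_pow]
  have hdeg : T.natDegree < Fintype.card F := by
    have h1 : T.natDegree ≤ 2 ^ (m - 1) := by
      apply Polynomial.natDegree_sum_le_of_forall_le
      intro i hi
      refine le_trans (Polynomial.natDegree_C_mul_le _ _) ?_
      rw [Polynomial.natDegree_X_pow]
      exact Nat.pow_le_pow_right (by norm_num) (by have := Finset.mem_range.mp hi; omega)
    have h2 : (2:ℕ) ^ (m - 1) < 2 ^ m := Nat.pow_lt_pow_right (by norm_num) (by omega)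
    rw [hcard]; omega
  have hT0 : T = 0 := by
    refine Polynomial.eq_zero_of_natDegree_lt_card_of_eval_eq_zero T
      (Function.injective_id) (fun x => ?_) hdeg
    rw [id_eq, heval]; exact h x
  have hco : T.coeff 1 = b := by
    rw [hT, Polynomial.finset_sum_coeff]
    rw [Finset.sum_eq_single 0]
    · simp
    · intro i hi hne
      rw [Polynomial.coeff_C_mul, Polynomial.coeff_X_pow, if_neg, mul_zero]
      intro hcontra
      have hgt : (1:ℕ) < 2 ^ i := Nat.one_lt_two_pow hne
      omega
    · intro h0
      exact absurd (Finset.mem_range.mpr (Nat.pos_of_ne_zero hm)) h0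
  rw [hT0] at hco
  simp at hco
  exact hb hco.symm

theorem sum_psiF_eq_zero (m : ℕ) (hm : m ≠ 0) (hcard : Fintype.card F = 2 ^ m) {b : F}
    (hb : b ≠ 0) : ∑ x : F, psiF m (b * x) = 0 := by
  obtain ⟨x₀, hx₀⟩ := exists_tr_ne m hm hcard hb
  have hpsi : psiF m (b * x₀) = -1 := if_neg hx₀
  have hshift : ∑ x : F, psiF m (b * (x + x₀)) = ∑ x : F, psiF m (b * x) :=
    Fintype.sum_equiv (Equiv.addRight x₀) _ _ (fun x => rfl)
  have hsplit : ∑ x : F, psiF m (b * (x + x₀)) = - ∑ x : F, psiF m (b * x) := by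
    have : ∀ x : F, psiF m (b * (x + x₀)) = psiF m (b * x) * psiF m (b * x₀) := by
      intro x
      rw [mul_add, psiF_add m hcard]
    simp only [this, hpsi, mul_neg_one]
    rw [Finset.sum_neg_distrib]
  rw [hsplit] at hshift
  linarith

theorem sum_psiF_mul (m : ℕ) (hm : m ≠ 0) (hcard : Fintype.card F = 2 ^ m) (w : F) :
    ∑ x : F, psiF m (x * w) = if w = 0 then ((2:ℝ) ^ m) else 0 := by
  by_cases hw : w = 0
  · subst hw
    simp [psiF_zero, Finset.card_univ, hcard]
  · rw [if_neg hw]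
    have : ∀ x : F, psiF m (x * w) = psiF m (w * x) := fun x => by rw [mul_comm]
    simp only [this]
    exact sum_psiF_eq_zero m hm hcard hw

end CharacterSums

section KeySum
variable {F : Type*} [Field F] [Fintype F] [DecidableEq F] [CharP F 2]

noncomputable def Qf (e : ℕ) (c : Fin e → F) (x : F) : F :=
  ∑ j : Fin e, c j * x ^ (2 ^ ((j : ℕ) + 1) + 1)

noncomputable def Pf (e : ℕ) (c : Fin e → F) (x z : F) : F :=
  ∑ j : Fin e, (c j * x ^ (2 ^ ((j : ℕ) + 1)) * z + c j * x * z ^ (2 ^ ((j : ℕ) + 1)))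

noncomputable def Lf (m e : ℕ) (c : Fin e → F) (z : F) : F :=
  ∑ j : Fin e, ((c j) ^ (2 ^ (m - (j : ℕ) - 1)) * z ^ (2 ^ (m - (j : ℕ) - 1))
      + c j * z ^ (2 ^ ((j : ℕ) + 1)))

noncomputable def trHom (m : ℕ) : F →+ F where
  toFun := trF m
  map_zero' := trF_zero m
  map_add' := trF_add m

theorem Qf_add (e : ℕ) (c : Fin e → F) (x z : F) :
    Qf e c (x + z) = Qf e c x + (Qf e c z + Pf e c x z) := by
  unfold Qf Pf
  rw [← Finset.sum_add_distrib, ← Finset.sum_add_distrib]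
  refine Finset.sum_congr rfl fun j _ => ?_
  have hfr : (x + z) ^ (2:ℕ) ^ ((j:ℕ) + 1) = x ^ (2:ℕ) ^ ((j:ℕ)+1) + z ^ (2:ℕ) ^ ((j:ℕ)+1) :=
    add_pow_char_pow ..
  rw [pow_succ (x + z) (2 ^ ((j:ℕ)+1)), hfr]
  ring

theorem trF_Pf (m e : ℕ) (hcard : Fintype.card F = 2 ^ m) (hme : e + 1 ≤ m)
    (c : Fin e → F) (x z : F) :
    trF m (Pf e c x z) = trF m (x * Lf m e c z) := by
  unfold Pf Lf
  rw [Finset.mul_sum]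
  have h1 := map_sum (trHom (F := F) m)
    (fun j : Fin e => c j * x ^ (2^((j:ℕ)+1)) * z + c j * x * z ^ (2^((j:ℕ)+1))) Finset.univ
  have h2 := map_sum (trHom (F := F) m)
    (fun j : Fin e => x * ((c j) ^ (2 ^ (m - (j:ℕ) - 1)) * z ^ (2 ^ (m - (j:ℕ) - 1))
      + c j * z ^ (2 ^ ((j:ℕ) + 1)))) Finset.univ
  have hcoe : ∀ y : F, trHom (F := F) m y = trF m y := fun y => rfl
  simp only [hcoe] at h1 h2
  rw [h1, h2]
  refine Finset.sum_congr rfl fun j _ => ?_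
  have hj : (j:ℕ) + 1 ≤ m := by
    have := j.isLt; omega
  rw [mul_add, trF_add m, trF_add m]
  congr 1
  · have harith : 2 ^ (m - (j:ℕ) - 1) * 2 ^ ((j:ℕ) + 1) = 2 ^ m := by
      rw [← pow_add]; congr 1; omega
    have hexp : (x * ((c j) ^ (2^(m-(j:ℕ)-1)) * z ^ (2^(m-(j:ℕ)-1)))) ^ (2^((j:ℕ)+1))
        = c j * x ^ (2^((j:ℕ)+1)) * z := by
      rw [mul_pow, mul_pow, ← pow_mul, ← pow_mul, harith, pow_card_eq m hcard,
        pow_card_eq m hcard]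
      ring
    calc trF m (c j * x ^ (2^((j:ℕ)+1)) * z)
        = trF m ((x * ((c j) ^ (2^(m-(j:ℕ)-1)) * z ^ (2^(m-(j:ℕ)-1)))) ^ (2^((j:ℕ)+1))) := by
          rw [hexp]
      _ = trF m (x * ((c j) ^ (2^(m-(j:ℕ)-1)) * z ^ (2^(m-(j:ℕ)-1)))) :=
          trF_pow_shift m hcard _ _
  · exact congrArg (trF m) (by ring)

theorem key_sum_sq_le (m e : ℕ) (hm : m ≠ 0) (hcard : Fintype.card F = 2 ^ m)
    (hme : e + 1 ≤ m) (c : Fin e → F) (β : F) (hne : ¬ (c = 0 ∧ β = 0)) :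
    (∑ x : F, psiF m (Qf e c x + β * x)) ^ 2 ≤ 4 ^ e * 2 ^ m := by
  by_cases hc : c = 0
  · have hβ : β ≠ 0 := fun h => hne ⟨hc, h⟩
    have hQ0 : ∀ x : F, Qf e c x = 0 := by intro x; simp [Qf, hc]
    have hz : ∑ x : F, psiF m (Qf e c x + β * x) = 0 := by
      simp only [hQ0, zero_add]
      exact sum_psiF_eq_zero m hm hcard hβ
    rw [hz]
    have : (0:ℝ) ≤ 4 ^ e * 2 ^ m := by positivity
    nlinarith
  · obtain ⟨j₀, hj₀⟩ := Function.ne_iff.mp hc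
    classical
    set K : Finset F := Finset.univ.filter (fun z => Lf m e c z = 0) with hK
    have hS2 : (∑ x : F, psiF m (Qf e c x + β * x)) ^ 2
        = ∑ z ∈ K, psiF m (Qf e c z + β * z) * 2 ^ m := by
      rw [sq, Finset.sum_mul_sum]
      calc ∑ x : F, ∑ y : F, psiF m (Qf e c x + β * x) * psiF m (Qf e c y + β * y)
          = ∑ x : F, ∑ z : F, psiF m (Qf e c x + β * x) * psiF m (Qf e c (x+z) + β * (x+z)) := by
            refine Finset.sum_congr rfl fun x _ => ?_
            exact (Fintype.sum_equiv (Equiv.addLeft x)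
              (fun z => psiF m (Qf e c x + β * x) * psiF m (Qf e c (x+z) + β * (x+z)))
              (fun y => psiF m (Qf e c x + β * x) * psiF m (Qf e c y + β * y))
              (fun z => rfl)).symm
        _ = ∑ x : F, ∑ z : F, psiF m (Qf e c z + β * z) * psiF m (x * Lf m e c z) := by
            refine Finset.sum_congr rfl fun x _ => Finset.sum_congr rfl fun z _ => ?_
            rw [← psiF_add m hcard, ← psiF_add m hcard]
            apply psiF_congr
            have h2 : (2 : F) = 0 := CharTwo.two_eq_zero
            have e1 : (Qf e c x + β * x) + (Qf e c (x + z) + β * (x + z))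
                = (Qf e c z + β * z) + Pf e c x z := by
              rw [Qf_add e c x z]; linear_combination (Qf e c x + β * x) * h2
            rw [e1, trF_add m, trF_add m, trF_Pf m e hcard hme c x z, ← trF_add m, ← trF_add m]
        _ = ∑ z : F, psiF m (Qf e c z + β * z) * ∑ x : F, psiF m (x * Lf m e c z) := by
            rw [Finset.sum_comm]
            exact Finset.sum_congr rfl fun z _ => (Finset.mul_sum _ _ _).symm
        _ = ∑ z ∈ K, psiF m (Qf e c z + β * z) * 2 ^ m := by
            have hite : ∀ z : F, psiF m (Qf e c z + β * z) * ∑ x : F, psiF m (x * Lf m e c z)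
                = if Lf m e c z = 0 then psiF m (Qf e c z + β * z) * 2 ^ m else 0 := by
              intro z
              rw [sum_psiF_mul m hm hcard]
              split <;> simp
            simp only [hite]
            exact (Finset.sum_filter _ _).symm
    -- card bound via polynomial
    set M : Polynomial F := ∑ j : Fin e,
      (Polynomial.C ((c j) ^ (2 ^ (e - (j:ℕ) - 1))) * Polynomial.X ^ (2 ^ (e - (j:ℕ) - 1))
        + Polynomial.C ((c j) ^ (2 ^ e)) * Polynomial.X ^ (2 ^ (e + (j:ℕ) + 1))) with hM
    have hMeval : ∀ z : F, M.eval z = (Lf m e c z) ^ (2 ^ e) := by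
      intro z
      have hmap := map_sum (iterateFrobenius F 2 e)
        (fun j : Fin e => (c j) ^ (2 ^ (m - (j:ℕ) - 1)) * z ^ (2 ^ (m - (j:ℕ) - 1))
          + c j * z ^ (2 ^ ((j:ℕ)+1))) Finset.univ
      simp only [iterateFrobenius_def] at hmap
      have hLf : (Lf m e c z) ^ (2 ^ e)
          = ∑ j : Fin e, ((c j) ^ (2 ^ (m - (j:ℕ) - 1)) * z ^ (2 ^ (m - (j:ℕ) - 1))
            + c j * z ^ (2 ^ ((j:ℕ)+1))) ^ (2 ^ e) := by
        unfold Lf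
        exact hmap
      rw [hLf]
      have heval : M.eval z = ∑ j : Fin e,
          ((c j) ^ (2 ^ (e - (j:ℕ) - 1)) * z ^ (2 ^ (e - (j:ℕ) - 1))
            + (c j) ^ (2 ^ e) * z ^ (2 ^ (e + (j:ℕ) + 1))) := by
        simp [hM, Polynomial.eval_finset_sum]
      rw [heval]
      refine Finset.sum_congr rfl fun j _ => ?_
      have hje : (j:ℕ) + 1 ≤ e := j.isLt
      have hfr : ((c j) ^ (2 ^ (m - (j:ℕ) - 1)) * z ^ (2 ^ (m - (j:ℕ) - 1))
            + c j * z ^ (2 ^ ((j:ℕ)+1))) ^ (2 ^ e)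
          = ((c j) ^ (2 ^ (m - (j:ℕ) - 1)) * z ^ (2 ^ (m - (j:ℕ) - 1))) ^ (2^e)
            + (c j * z ^ (2 ^ ((j:ℕ)+1))) ^ (2^e) := add_pow_char_pow ..
      rw [hfr]
      congr 1
      · have har : 2 ^ (m - (j:ℕ) - 1) * 2 ^ e = 2 ^ m * 2 ^ (e - (j:ℕ) - 1) := by
          rw [← pow_add, ← pow_add]; congr 1; omega
        rw [mul_pow, ← pow_mul, ← pow_mul, har, pow_mul, pow_mul,
          pow_card_eq m hcard, pow_card_eq m hcard]
      · have har : 2 ^ ((j:ℕ) + 1) * 2 ^ e = 2 ^ (e + (j:ℕ) + 1) := by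
          rw [← pow_add]; congr 1; omega
        rw [mul_pow, ← pow_mul, har]
    have hMne : M ≠ 0 := by
      intro h0
      have hcoeff : M.coeff (2 ^ (e + (j₀:ℕ) + 1)) = (c j₀) ^ (2 ^ e) := by
        rw [hM, Polynomial.finset_sum_coeff]
        rw [Finset.sum_eq_single j₀]
        · rw [Polynomial.coeff_add, Polynomial.coeff_C_mul, Polynomial.coeff_C_mul,
            Polynomial.coeff_X_pow, Polynomial.coeff_X_pow]
          rw [if_neg, if_pos rfl, mul_one, mul_zero, zero_add]
          · intro hcon
            have h1 : 2 ^ (e - (j₀:ℕ) - 1) < 2 ^ (e + (j₀:ℕ) + 1) :=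
              Nat.pow_lt_pow_right (by norm_num) (by omega)
            omega
        · intro j _ hjne
          rw [Polynomial.coeff_add, Polynomial.coeff_C_mul, Polynomial.coeff_C_mul,
            Polynomial.coeff_X_pow, Polynomial.coeff_X_pow]
          rw [if_neg, if_neg, mul_zero, mul_zero, add_zero]
          · intro hcon
            have : e + (j₀:ℕ) + 1 = e + (j:ℕ) + 1 :=
              Nat.pow_right_injective (le_refl 2) hcon
            exact hjne (by
              apply Fin.ext
              omega)
          · intro hcon
            have h1 : 2 ^ (e - (j:ℕ) - 1) < 2 ^ (e + (j₀:ℕ) + 1) :=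
              Nat.pow_lt_pow_right (by norm_num) (by omega)
            omega
        · intro hni
          exact absurd (Finset.mem_univ j₀) hni
      rw [h0] at hcoeff
      simp only [Polynomial.coeff_zero] at hcoeff
      exact hj₀ (pow_eq_zero_iff (by positivity) |>.mp hcoeff.symm)
    have hdegM : M.natDegree ≤ 4 ^ e := by
      have hd : M.natDegree ≤ 2 ^ (2 * e) := by
        apply Polynomial.natDegree_sum_le_of_forall_le
        intro j _
        refine le_trans (Polynomial.natDegree_add_le _ _) ?_
        have hje : (j:ℕ) + 1 ≤ e := j.isLt
        apply max_le
        · refine le_trans (Polynomial.natDegree_C_mul_le _ _) ?_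
          rw [Polynomial.natDegree_X_pow]
          exact Nat.pow_le_pow_right (by norm_num) (by omega)
        · refine le_trans (Polynomial.natDegree_C_mul_le _ _) ?_
          rw [Polynomial.natDegree_X_pow]
          exact Nat.pow_le_pow_right (by norm_num) (by omega)
      calc M.natDegree ≤ 2 ^ (2 * e) := hd
        _ = 4 ^ e := by rw [pow_mul]; norm_num
    have hsub : K ⊆ M.roots.toFinset := by
      intro z hz
      rw [Multiset.mem_toFinset, Polynomial.mem_roots hMne]
      have hLz : Lf m e c z = 0 := (Finset.mem_filter.mp hz).2
      show M.eval z = 0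
      rw [hMeval z, hLz]
      exact zero_pow (by positivity)
    have hcardK : K.card ≤ 4 ^ e :=
      le_trans (Finset.card_le_card hsub)
        (le_trans (Multiset.toFinset_card_le _) (le_trans (Polynomial.card_roots' M) hdegM))
    rw [hS2]
    have hterm : ∀ z ∈ K, psiF m (Qf e c z + β * z) * 2 ^ m ≤ (2:ℝ) ^ m := by
      intro z _
      have h1 := psiF_le_one m (Qf e c z + β * z)
      nlinarith [pow_pos (by norm_num : (0:ℝ) < 2) m]
    calc ∑ z ∈ K, psiF m (Qf e c z + β * z) * 2 ^ m
        ≤ ∑ _z ∈ K, (2:ℝ) ^ m := Finset.sum_le_sum hterm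
      _ = K.card * 2 ^ m := by rw [Finset.sum_const, nsmul_eq_mul]
      _ ≤ 4 ^ e * 2 ^ m := by
          apply mul_le_mul_of_nonneg_right _ (by positivity)
          calc (K.card : ℝ) ≤ ((4:ℕ) ^ e : ℕ) := by exact_mod_cast hcardK
            _ = 4 ^ e := by push_cast; ring

end KeySum

section Plumbing

variable {p : ℝ}

theorem pNorm_ofReal_apply (hp : 0 ≤ p) {N : ℕ} (x : Fin N → ℝ) :
    pNorm (ENNReal.ofReal p) x = (∑ i, |x i| ^ p) ^ (1/p) := by
  rw [pNorm, if_neg ENNReal.ofReal_ne_top, ENNReal.toReal_ofReal hp]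

theorem pNorm_top_apply {N : ℕ} (y : Fin N → ℝ) : pNorm ∞ y = ⨆ i, |y i| := if_pos rfl

theorem pNorm_top_le {N : ℕ} {y : Fin N → ℝ} {a : ℝ} (ha : 0 ≤ a)
    (h : ∀ i, |y i| ≤ a) : pNorm ∞ y ≤ a := by
  rw [pNorm_top_apply]
  rcases Nat.eq_zero_or_pos N with hN | hN
  · subst hN
    rw [show (⨆ i : Fin 0, |y i|) = 0 from Real.iSup_of_isEmpty _]
    exact ha
  · haveI : Nonempty (Fin N) := Fin.pos_iff_nonempty.mp hN
    exact ciSup_le h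

theorem pNorm_ofReal_zero (hp : 0 < p) {N : ℕ} :
    pNorm (ENNReal.ofReal p) (0 : Fin N → ℝ) = 0 := by
  rw [pNorm_ofReal_apply hp.le]
  have : ∀ i : Fin N, |(0:Fin N → ℝ) i| ^ p = 0 := fun i => by
    simp [Real.zero_rpow hp.ne']
  rw [Finset.sum_congr rfl fun i _ => this i]
  rw [Finset.sum_const, smul_zero]
  exact Real.zero_rpow (by positivity : (1/p) ≠ 0)

theorem pNorm_top_zero {N : ℕ} : pNorm ∞ (0 : Fin N → ℝ) = 0 := by
  rw [pNorm_top_apply]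
  rcases Nat.eq_zero_or_pos N with hN | hN
  · subst hN
    exact Real.iSup_of_isEmpty _
  · haveI : Nonempty (Fin N) := Fin.pos_iff_nonempty.mp hN
    simp

theorem abs_le_one_of_pNorm_le (hp1 : 0 < p) (hp2 : p ≤ 1) {N : ℕ} {x : Fin N → ℝ}
    (hx : pNorm (ENNReal.ofReal p) x ≤ 1) : ∀ i, |x i| ≤ 1 := by
  rw [pNorm_ofReal_apply hp1.le] at hx
  set A := ∑ i, |x i| ^ p with hA
  have hA0 : 0 ≤ A := Finset.sum_nonneg fun i _ => Real.rpow_nonneg (abs_nonneg _) _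
  have hA1 : A ≤ 1 := by
    have h1 : (A ^ (1/p)) ^ p ≤ (1:ℝ) ^ p :=
      Real.rpow_le_rpow (Real.rpow_nonneg hA0 _) hx hp1.le
    rwa [Real.one_rpow, ← Real.rpow_mul hA0, one_div,
      inv_mul_cancel₀ hp1.ne', Real.rpow_one] at h1
  intro i
  by_contra hgt
  push_neg at hgt
  have h2 : |x i| ^ p ≤ A := Finset.single_le_sum
    (fun j (_ : j ∈ Finset.univ) => Real.rpow_nonneg (abs_nonneg _) p) (Finset.mem_univ i)
  have h3 : 1 < |x i| ^ p := by
    rw [Real.one_lt_rpow_iff (abs_nonneg _)]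
    exact Or.inl ⟨hgt, hp1⟩
  linarith

theorem sum_abs_le_one_of_pNorm_le (hp1 : 0 < p) (hp2 : p ≤ 1) {N : ℕ} {x : Fin N → ℝ}
    (hx : pNorm (ENNReal.ofReal p) x ≤ 1) : ∑ i, |x i| ≤ 1 := by
  have habs := abs_le_one_of_pNorm_le hp1 hp2 hx
  have hA1 : ∑ i, |x i| ^ p ≤ 1 := by
    rw [pNorm_ofReal_apply hp1.le] at hx
    have hA0 : 0 ≤ ∑ i, |x i| ^ p :=
      Finset.sum_nonneg fun i _ => Real.rpow_nonneg (abs_nonneg _) _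
    have h1 : ((∑ i, |x i| ^ p) ^ (1/p)) ^ p ≤ (1:ℝ) ^ p :=
      Real.rpow_le_rpow (Real.rpow_nonneg hA0 _) hx hp1.le
    rwa [Real.one_rpow, ← Real.rpow_mul hA0, one_div,
      inv_mul_cancel₀ hp1.ne', Real.rpow_one] at h1
  calc ∑ i, |x i| ≤ ∑ i, |x i| ^ p := by
        apply Finset.sum_le_sum
        intro i _
        rcases eq_or_lt_of_le (abs_nonneg (x i)) with h0 | h0
        · rw [← h0, Real.zero_rpow hp1.ne']
        · calc |x i| = |x i| ^ (1:ℝ) := (Real.rpow_one _).symm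
            _ ≤ |x i| ^ p := Real.rpow_le_rpow_of_exponent_ge h0 (habs i) hp2
    _ ≤ 1 := hA1

end Plumbing

section ApproxPlumbing
variable {p : ℝ}

def innerSet (P : ℝ≥0∞) (N : ℕ) (L : (Fin N → ℝ) →ₗ[ℝ] (Fin N → ℝ)) : Set ℝ :=
  { s : ℝ | ∃ x : Fin N → ℝ, pNorm P x ≤ 1 ∧ s = pNorm ∞ (x - L x) }

theorem approxNumber_eq (P : ℝ≥0∞) (N n : ℕ) :
    approxNumber P ∞ N n = sInf { r : ℝ | ∃ L : (Fin N → ℝ) →ₗ[ℝ] (Fin N → ℝ),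
      Module.finrank ℝ (↥(LinearMap.range L)) < n ∧ r = sSup (innerSet P N L) } := rfl

theorem zero_mem_innerSet (hp1 : 0 < p) (N : ℕ) (L : (Fin N → ℝ) →ₗ[ℝ] (Fin N → ℝ)) :
    (0:ℝ) ∈ innerSet (ENNReal.ofReal p) N L := by
  refine ⟨0, ?_, ?_⟩
  · rw [pNorm_ofReal_zero hp1]; norm_num
  · rw [map_zero, sub_zero, pNorm_top_zero]

theorem L_apply_eq (N : ℕ) (L : (Fin N → ℝ) →ₗ[ℝ] (Fin N → ℝ)) (x : Fin N → ℝ) (i : Fin N) :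
    L x i = ∑ j, (LinearMap.toMatrix' L) i j * x j := by
  have h1 : L x = Matrix.toLin' (LinearMap.toMatrix' L) x := by rw [Matrix.toLin'_toMatrix']
  rw [h1, Matrix.toLin'_apply]
  rfl

theorem bddAbove_innerSet (hp1 : 0 < p) (hp2 : p ≤ 1) (N : ℕ)
    (L : (Fin N → ℝ) →ₗ[ℝ] (Fin N → ℝ)) : BddAbove (innerSet (ENNReal.ofReal p) N L) := by
  classical
  refine ⟨1 + ∑ i, ∑ j, |(LinearMap.toMatrix' L) i j|, fun s hs => ?_⟩
  obtain ⟨x, hx, rfl⟩ := hs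
  have habs := abs_le_one_of_pNorm_le hp1 hp2 hx
  apply pNorm_top_le (by positivity)
  intro i
  have hLb : |L x i| ≤ ∑ i, ∑ j, |(LinearMap.toMatrix' L) i j| := by
    rw [L_apply_eq]
    calc |∑ j, (LinearMap.toMatrix' L) i j * x j| ≤ ∑ j, |(LinearMap.toMatrix' L) i j * x j| :=
          Finset.abs_sum_le_sum_abs _ _
      _ ≤ ∑ j, |(LinearMap.toMatrix' L) i j| := by
          apply Finset.sum_le_sum
          intro j _
          rw [abs_mul]
          exact mul_le_of_le_one_right (abs_nonneg _) (habs j)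
      _ ≤ ∑ i, ∑ j, |(LinearMap.toMatrix' L) i j| :=
          Finset.single_le_sum (f := fun i => ∑ j, |(LinearMap.toMatrix' L) i j|)
            (fun i _ => Finset.sum_nonneg fun j _ => abs_nonneg _) (Finset.mem_univ i)
  calc |(x - L x) i| = |x i - L x i| := rfl
    _ ≤ |x i| + |L x i| := abs_sub _ _
    _ ≤ 1 + ∑ i, ∑ j, |(LinearMap.toMatrix' L) i j| := add_le_add (habs i) hLb

theorem sSup_innerSet_nonneg (hp1 : 0 < p) (hp2 : p ≤ 1) (N : ℕ)
    (L : (Fin N → ℝ) →ₗ[ℝ] (Fin N → ℝ)) : 0 ≤ sSup (innerSet (ENNReal.ofReal p) N L) :=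
  le_csSup (bddAbove_innerSet hp1 hp2 N L) (zero_mem_innerSet hp1 N L)

theorem bddBelow_outerSet (hp1 : 0 < p) (hp2 : p ≤ 1) (N n : ℕ) :
    BddBelow { r : ℝ | ∃ L : (Fin N → ℝ) →ₗ[ℝ] (Fin N → ℝ),
      Module.finrank ℝ (↥(LinearMap.range L)) < n ∧ r = sSup (innerSet (ENNReal.ofReal p) N L) } := by
  refine ⟨0, fun r hr => ?_⟩
  obtain ⟨L, _, rfl⟩ := hr
  exact sSup_innerSet_nonneg hp1 hp2 N L

theorem approxNumber_le_of_bound (hp1 : 0 < p) (hp2 : p ≤ 1) {N n : ℕ}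
    (L : (Fin N → ℝ) →ₗ[ℝ] (Fin N → ℝ))
    (hrank : Module.finrank ℝ (↥(LinearMap.range L)) < n) {b : ℝ} (hb : 0 ≤ b)
    (hband : ∀ x : Fin N → ℝ, pNorm (ENNReal.ofReal p) x ≤ 1 → pNorm ∞ (x - L x) ≤ b) :
    approxNumber (ENNReal.ofReal p) ∞ N n ≤ b := by
  rw [approxNumber_eq]
  have h1 : sInf { r : ℝ | ∃ L : (Fin N → ℝ) →ₗ[ℝ] (Fin N → ℝ),
      Module.finrank ℝ (↥(LinearMap.range L)) < n ∧ r = sSup (innerSet (ENNReal.ofReal p) N L) }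
      ≤ sSup (innerSet (ENNReal.ofReal p) N L) :=
    csInf_le (bddBelow_outerSet hp1 hp2 N n) ⟨L, hrank, rfl⟩
  have h2 : sSup (innerSet (ENNReal.ofReal p) N L) ≤ b := by
    apply csSup_le ⟨0, zero_mem_innerSet hp1 N L⟩
    rintro s ⟨x, hx, rfl⟩
    exact hband x hx
  linarith

theorem approxNumber_le_one (hp1 : 0 < p) (hp2 : p ≤ 1) (N : ℕ) {n : ℕ} (hn : 1 ≤ n) :
    approxNumber (ENNReal.ofReal p) ∞ N n ≤ 1 := by
  apply approxNumber_le_of_bound hp1 hp2 (0 : (Fin N → ℝ) →ₗ[ℝ] (Fin N → ℝ))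
  · rw [LinearMap.range_zero, finrank_bot]
    omega
  · norm_num
  · intro x hx
    have h0 : x - (0 : (Fin N → ℝ) →ₗ[ℝ] (Fin N → ℝ)) x = x := by
      simp
    rw [h0]
    exact pNorm_top_le (by norm_num) (abs_le_one_of_pNorm_le hp1 hp2 hx)

theorem approxNumber_zero_lt (hp1 : 0 < p) (hp2 : p ≤ 1) (N : ℕ) :
    approxNumber (ENNReal.ofReal p) ∞ N 0 ≤ 1 := by
  rw [approxNumber_eq]
  have hempty : { r : ℝ | ∃ L : (Fin N → ℝ) →ₗ[ℝ] (Fin N → ℝ),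
      Module.finrank ℝ (↥(LinearMap.range L)) < 0 ∧
      r = sSup (innerSet (ENNReal.ofReal p) N L) } = ∅ := by
    ext r
    simp only [Set.mem_setOf_eq, Set.mem_empty_iff_false, iff_false]
    rintro ⟨L, h, _⟩
    omega
  rw [hempty, Real.sInf_empty]
  norm_num

theorem approxNumber_eq_zero_of_gt (hp1 : 0 < p) (hp2 : p ≤ 1) {N n : ℕ} (hn : N < n) :
    approxNumber (ENNReal.ofReal p) ∞ N n = 0 := by
  have hrank : Module.finrank ℝ
      (↥(LinearMap.range (LinearMap.id : (Fin N → ℝ) →ₗ[ℝ] (Fin N → ℝ)))) < n := by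
    rw [LinearMap.range_id, finrank_top, Module.finrank_pi, Fintype.card_fin]
    exact hn
  apply le_antisymm
  · apply approxNumber_le_of_bound hp1 hp2 LinearMap.id hrank le_rfl
    intro x hx
    simp only [LinearMap.id_coe, id_eq, sub_self]
    rw [pNorm_top_zero]
  · rw [approxNumber_eq]
    apply le_csInf
    · exact ⟨_, LinearMap.id, hrank, rfl⟩
    · rintro r ⟨L, _, rfl⟩
      exact sSup_innerSet_nonneg hp1 hp2 N L

end ApproxPlumbing

section GoodMatrix
open Matrix in

theorem exists_good_matrix (m e N : ℕ) (hm : m ≠ 0) (hme : e + 1 ≤ m)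
    (hcount : N ≤ 2 ^ (m * (e + 1))) :
    ∃ B : Matrix (Fin N) (Fin N) ℝ,
      Module.finrank ℝ (↥(LinearMap.range (Matrix.toLin' B))) ≤ 2 ^ m ∧
      (∀ i, B i i = 1) ∧
      (∀ i j, i ≠ j → |B i j| ≤ 2 ^ e / Real.sqrt (2 ^ m)) := by
  classical
  haveI : Fact (Nat.Prime 2) := ⟨Nat.prime_two⟩
  set F := GaloisField 2 m with hF
  haveI : Fintype F := Fintype.ofFinite F
  have hcard : Fintype.card F = 2 ^ m := by
    rw [← Nat.card_eq_fintype_card]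
    exact GaloisField.card 2 m hm
  have hcardι : N ≤ Fintype.card ((Fin e → F) × F) := by
    rw [Fintype.card_prod, Fintype.card_fun, Fintype.card_fin, hcard]
    calc N ≤ 2 ^ (m * (e + 1)) := hcount
      _ = (2 ^ m) ^ e * 2 ^ m := by
          rw [show m * (e + 1) = m * e + m by ring, pow_add, pow_mul]
  obtain ⟨emb⟩ : Nonempty (Fin N ↪ ((Fin e → F) × F)) :=
    Function.Embedding.nonempty_of_card_le (by rw [Fintype.card_fin]; exact hcardι)
  have hpsisq : ∀ y : F, psiF m y * psiF m y = 1 := fun y => by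
    unfold psiF; split <;> norm_num
  have hQc : ∀ (a a' : Fin e → F) (x : F),
      Qf e a x + Qf e a' x = Qf e (a + a') x := by
    intro a a' x
    unfold Qf
    rw [← Finset.sum_add_distrib]
    exact Finset.sum_congr rfl fun j _ => (add_mul _ _ _).symm
  set v : ((Fin e → F) × F) → F → ℝ := fun ab x => psiF m (Qf e ab.1 x + ab.2 * x) with hv
  set A : Matrix F (Fin N) ℝ := Matrix.of fun x i => v (emb i) x with hA
  set A2 : Matrix F (Fin N) ℝ := Matrix.of fun x i => v (emb i) x / 2 ^ m with hA2
  refine ⟨Aᵀ * A2, ?_, ?_, ?_⟩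
  · -- rank bound
    rw [Matrix.toLin'_mul]
    refine le_trans (Submodule.finrank_mono (LinearMap.range_comp_le_range _ _)) ?_
    refine le_trans (LinearMap.finrank_range_le _) ?_
    rw [Module.finrank_pi, hcard]
  · -- diagonal
    intro i
    rw [Matrix.mul_apply]
    have hterm : ∀ x : F, (Aᵀ) i x * A2 x i = 1 / 2 ^ m := by
      intro x
      have : (Aᵀ) i x = v (emb i) x := rfl
      rw [this]
      have : A2 x i = v (emb i) x / 2 ^ m := rfl
      rw [this, hv]
      rw [div_eq_mul_one_div, ← mul_assoc, hpsisq, one_mul]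
    rw [Finset.sum_congr rfl fun x _ => hterm x, Finset.sum_const, Finset.card_univ, hcard,
      nsmul_eq_mul]
    push_cast
    field_simp
  · -- off-diagonal
    intro i j hij
    rw [Matrix.mul_apply]
    set c : Fin e → F := (emb i).1 + (emb j).1 with hc
    set β : F := (emb i).2 + (emb j).2 with hβ
    have hterm : ∀ x : F, (Aᵀ) i x * A2 x j = psiF m (Qf e c x + β * x) / 2 ^ m := by
      intro x
      have h1 : (Aᵀ) i x = v (emb i) x := rfl
      have h2 : A2 x j = v (emb j) x / 2 ^ m := rfl
      rw [h1, h2, hv]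
      simp only []
      rw [div_eq_mul_one_div, ← mul_assoc, ← psiF_add m hcard,
        div_eq_mul_one_div (psiF m (Qf e c x + β * x))]
      congr 2
      rw [hc, hβ]
      have harr : Qf e (emb i).1 x + (emb i).2 * x + (Qf e (emb j).1 x + (emb j).2 * x)
          = (Qf e (emb i).1 x + Qf e (emb j).1 x) + ((emb i).2 + (emb j).2) * x := by
        ring
      rw [harr, hQc]
    rw [Finset.sum_congr rfl fun x _ => hterm x, ← Finset.sum_div]
    have hne : ¬(c = 0 ∧ β = 0) := by
      rintro ⟨hc0, hβ0⟩
      apply hij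
      apply emb.injective
      have haddeq : ∀ u w : F, u + w = 0 → u = w := by
        intro u w h
        have hw := CharTwo.add_self_eq_zero (R := F) w
        linear_combination h - hw
      have h1 : (emb i).1 = (emb j).1 := by
        funext k
        have hk := congrFun hc0 k
        exact haddeq _ _ hk
      have h2 : (emb i).2 = (emb j).2 := haddeq _ _ hβ0
      exact Prod.ext h1 h2
    have hkey := key_sum_sq_le m e hm hcard hme c β hne
    set S := ∑ x : F, psiF m (Qf e c x + β * x) with hS
    have hSabs : |S| ≤ 2 ^ e * Real.sqrt (2 ^ m) := by
      have h1 : |S| = Real.sqrt (S ^ 2) := (Real.sqrt_sq_eq_abs S).symm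
      rw [h1]
      calc Real.sqrt (S ^ 2) ≤ Real.sqrt (4 ^ e * 2 ^ m) := Real.sqrt_le_sqrt hkey
        _ = 2 ^ e * Real.sqrt (2 ^ m) := by
            have h4 : (4:ℝ) ^ e = (2 ^ e) ^ 2 := by
              rw [show (4:ℝ) = 2 ^ 2 by norm_num, ← pow_mul, ← pow_mul, Nat.mul_comm]
            rw [h4, Real.sqrt_mul (by positivity), Real.sqrt_sq (by positivity)]
    have hsqrtpos : (0:ℝ) < Real.sqrt (2 ^ m) := Real.sqrt_pos.mpr (by positivity)
    rw [abs_div, abs_of_pos (by positivity : (0:ℝ) < (2:ℝ) ^ m)]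
    rw [div_le_div_iff₀ (by positivity) hsqrtpos]
    calc |S| * Real.sqrt (2 ^ m) ≤ (2 ^ e * Real.sqrt (2 ^ m)) * Real.sqrt (2 ^ m) := by
          apply mul_le_mul_of_nonneg_right hSabs hsqrtpos.le
      _ = 2 ^ e * (2:ℝ) ^ m := by
          rw [mul_assoc, Real.mul_self_sqrt (by positivity)]

end GoodMatrix

section Final
variable {p : ℝ}

theorem approxNumber_middle (hp1 : 0 < p) (hp2 : p ≤ 1) (e : ℕ) (he : 1 ≤ e)
    {N n : ℕ} (hn4 : 4 ^ (e + 1) ≤ n) (hNn : N < n ^ e) :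
    approxNumber (ENNReal.ofReal p) ∞ N n ≤ 2 ^ (e + 1) * ((n : ℝ) ^ (-(1/2) : ℝ)) := by
  classical
  set m := Nat.log 2 (n - 1) with hmdef
  have hn16 : 16 ≤ n := by
    calc (16:ℕ) = 4 ^ 2 := by norm_num
      _ ≤ 4 ^ (e + 1) := Nat.pow_le_pow_right (by norm_num) (by omega)
      _ ≤ n := hn4
  have h2m_le : 2 ^ m ≤ n - 1 := Nat.pow_log_le_self 2 (by omega)
  have h2m1 : n ≤ 2 ^ (m + 1) := by
    have h := Nat.lt_pow_succ_log_self (by norm_num : 1 < 2) (n - 1)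
    rw [← hmdef, Nat.succ_eq_add_one] at h
    omega
  have hme : e + 1 ≤ m := by
    have h1 : (2:ℕ) ^ (2 * (e + 1)) ≤ 2 ^ (m + 1) := by
      calc (2:ℕ) ^ (2 * (e + 1)) = 4 ^ (e + 1) := by
            rw [show (4:ℕ) = 2 ^ 2 by norm_num, ← pow_mul]
        _ ≤ n := hn4
        _ ≤ 2 ^ (m + 1) := h2m1
    have := (Nat.pow_le_pow_iff_right (by norm_num : 1 < 2)).mp h1
    omega
  have hm0 : m ≠ 0 := by
    intro h0
    rw [h0] at h2m1
    norm_num at h2m1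
    omega
  have hcount : N ≤ 2 ^ (m * (e + 1)) := by
    have h1 : n ^ (e + 1) ≤ (2:ℕ) ^ ((m + 1) * (e + 1)) := by
      rw [pow_mul]
      exact Nat.pow_le_pow_left h2m1 _
    have h2 : n ^ e * 4 ^ (e + 1) ≤ n ^ (e + 1) := by
      rw [pow_succ]
      exact Nat.mul_le_mul_left _ hn4
    have h3 : (2:ℕ) ^ ((m + 1) * (e + 1)) = 2 ^ (m * (e + 1)) * 2 ^ (e + 1) := by
      rw [← pow_add]; congr 1; ring
    have h4 : (4:ℕ) ^ (e + 1) = 2 ^ (e + 1) * 2 ^ (e + 1) := by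
      rw [show (4:ℕ) = 2 * 2 from rfl, mul_pow]
    have h5 : n ^ e * 2 ^ (e + 1) ≤ 2 ^ (m * (e + 1)) := by
      have h6 := le_trans h2 h1
      rw [h3, h4, ← mul_assoc] at h6
      exact Nat.le_of_mul_le_mul_right h6 (by positivity)
    calc N ≤ n ^ e := le_of_lt hNn
      _ ≤ n ^ e * 2 ^ (e + 1) := Nat.le_mul_of_pos_right _ (by positivity)
      _ ≤ 2 ^ (m * (e + 1)) := h5
  obtain ⟨B, hrank, hdiag, hoff⟩ := exists_good_matrix m e N hm0 hme hcount
  set μ : ℝ := 2 ^ e / Real.sqrt (2 ^ m) with hμ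
  have hsqm : (0:ℝ) < Real.sqrt (2 ^ m) := Real.sqrt_pos.mpr (by positivity)
  have hμ0 : 0 ≤ μ := by positivity
  have hbound : approxNumber (ENNReal.ofReal p) ∞ N n ≤ μ := by
    apply approxNumber_le_of_bound hp1 hp2 (Matrix.toLin' B) _ hμ0
    · intro x hx
      have hsum1 := sum_abs_le_one_of_pNorm_le hp1 hp2 hx
      apply pNorm_top_le hμ0
      intro i
      have hBx : Matrix.toLin' B x i = ∑ j, B i j * x j := by
        rw [Matrix.toLin'_apply]; rfl
      have hsplit : x i - Matrix.toLin' B x i = - ∑ j ∈ Finset.univ.erase i, B i j * x j := by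
        rw [hBx, ← Finset.add_sum_erase _ _ (Finset.mem_univ i), hdiag i, one_mul]
        ring
      have hxi : (x - Matrix.toLin' B x) i = x i - Matrix.toLin' B x i := rfl
      rw [hxi, hsplit, abs_neg]
      calc |∑ j ∈ Finset.univ.erase i, B i j * x j|
          ≤ ∑ j ∈ Finset.univ.erase i, |B i j * x j| := Finset.abs_sum_le_sum_abs _ _
        _ ≤ ∑ j ∈ Finset.univ.erase i, μ * |x j| := by
            apply Finset.sum_le_sum
            intro j hj
            rw [abs_mul]
            apply mul_le_mul_of_nonneg_right _ (abs_nonneg _)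
            exact hoff i j (Finset.ne_of_mem_erase hj).symm
        _ = μ * ∑ j ∈ Finset.univ.erase i, |x j| := by rw [Finset.mul_sum]
        _ ≤ μ * ∑ j, |x j| := by
            apply mul_le_mul_of_nonneg_left _ hμ0
            apply Finset.sum_le_sum_of_subset_of_nonneg (Finset.erase_subset _ _)
            intro j _ _
            exact abs_nonneg _
        _ ≤ μ * 1 := mul_le_mul_of_nonneg_left hsum1 hμ0
        _ = μ := mul_one μ
    · calc Module.finrank ℝ (↥(LinearMap.range (Matrix.toLin' B))) ≤ 2 ^ m := hrank
        _ < n := by omega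
  refine le_trans hbound ?_
  have hn0' : (0:ℝ) < n := by
    have : (0:ℕ) < n := by omega
    exact_mod_cast this
  have hsn : (0:ℝ) < Real.sqrt n := Real.sqrt_pos.mpr hn0'
  have hinv : (n:ℝ) ^ (-(1/2) : ℝ) = (Real.sqrt n)⁻¹ := by
    rw [Real.rpow_neg (le_of_lt hn0'), Real.sqrt_eq_rpow]
  rw [hinv]
  have hsq2 : Real.sqrt n ≤ 2 * Real.sqrt (2 ^ m) := by
    have h1 : (n:ℝ) ≤ 4 * 2 ^ m := by
      have h2 : (n:ℝ) ≤ 2 ^ (m + 1) := by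
        have := h2m1
        calc (n:ℝ) ≤ ((2 ^ (m+1) : ℕ) : ℝ) := by exact_mod_cast this
          _ = 2 ^ (m + 1) := by push_cast; ring
      calc (n:ℝ) ≤ 2 ^ (m + 1) := h2
        _ ≤ 4 * 2 ^ m := by
            rw [pow_succ]
            nlinarith [pow_pos (by norm_num : (0:ℝ) < 2) m]
    calc Real.sqrt n ≤ Real.sqrt (4 * 2 ^ m) := Real.sqrt_le_sqrt h1
      _ = 2 * Real.sqrt (2 ^ m) := by
          rw [show (4:ℝ) * 2 ^ m = 2 ^ 2 * 2 ^ m by norm_num,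
            Real.sqrt_mul (by positivity), Real.sqrt_sq (by norm_num)]
  have key : (2:ℝ) ^ e * Real.sqrt n ≤ 2 ^ (e + 1) * Real.sqrt (2 ^ m) := by
    calc (2:ℝ) ^ e * Real.sqrt n ≤ 2 ^ e * (2 * Real.sqrt (2 ^ m)) :=
          mul_le_mul_of_nonneg_left hsq2 (by positivity)
      _ = 2 ^ (e + 1) * Real.sqrt (2 ^ m) := by rw [pow_succ]; ring
  have heq : (2:ℝ) ^ (e + 1) * (Real.sqrt n)⁻¹ * Real.sqrt (2 ^ m)
      = (2 ^ (e + 1) * Real.sqrt (2 ^ m)) / Real.sqrt n := by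
    field_simp
  rw [hμ, div_le_iff₀ hsqm, heq, le_div_iff₀ hsn]
  exact key

end Final

/-- For `0 < p ≤ 1` and `0 < λ < 1` there is `C_λ > 0` with
`a_n(id : ℓ_p^N → ℓ_∞^N) ≤ 1` if `n ≤ N^λ`, `≤ C_λ·n^{-1/2}` if `N^λ < n ≤ N`,
and `= 0` if `n > N`. -/
theorem approx_lp_linfty_upper (p lam : ℝ) (h1 : 0 < p) (h2 : p ≤ 1)
    (hl1 : 0 < lam) (hl2 : lam < 1) :
    ∃ C : ℝ, 0 < C ∧ ∀ N n : ℕ,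
      ((n : ℝ) ≤ (N : ℝ) ^ lam → approxNumber (ENNReal.ofReal p) ∞ N n ≤ 1) ∧
      ((N : ℝ) ^ lam < (n : ℝ) → n ≤ N →
        approxNumber (ENNReal.ofReal p) ∞ N n ≤ C * (n : ℝ) ^ (-(1/2) : ℝ)) ∧
      (n > N → approxNumber (ENNReal.ofReal p) ∞ N n = 0) := by
  classical
  set e := ⌈1/lam⌉₊ with he
  have he1 : 1 ≤ e := by
    rw [he]
    have : (0:ℝ) < 1/lam := by positivity
    exact Nat.one_le_iff_ne_zero.mpr (by
      intro h0
      rw [Nat.ceil_eq_zero] at h0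
      linarith)
  have heinv : 1/lam ≤ (e:ℝ) := Nat.le_ceil _
  refine ⟨2 ^ (e + 1), by positivity, ?_⟩
  intro N n
  refine ⟨?_, ?_, ?_⟩
  · intro _
    rcases Nat.eq_zero_or_pos n with hn0 | hn0
    · subst hn0
      exact approxNumber_zero_lt h1 h2 N
    · exact approxNumber_le_one h1 h2 N hn0
  · intro hlow hupp
    have hN1 : 1 ≤ N := by
      by_contra hcon
      push_neg at hcon
      interval_cases N
      · rw [Nat.cast_zero, Real.zero_rpow hl1.ne'] at hlow
        have hn0 : n = 0 := Nat.le_zero.mp hupp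
        subst hn0
        simp at hlow
    have hNlam1 : (1:ℝ) ≤ (N:ℝ) ^ lam := by
      have hN1' : (1:ℝ) ≤ (N:ℝ) := by exact_mod_cast hN1
      calc (1:ℝ) = 1 ^ lam := (Real.one_rpow lam).symm
        _ ≤ (N:ℝ) ^ lam := Real.rpow_le_rpow (by norm_num) hN1' hl1.le
    have hn1 : (1:ℝ) < (n:ℝ) := lt_of_le_of_lt hNlam1 hlow
    have hn2 : 2 ≤ n := by exact_mod_cast (by exact_mod_cast hn1 : (1:ℕ) < n)
    have hNn : N < n ^ e := by
      have h0 : (N:ℝ) = ((N:ℝ) ^ lam) ^ ((1:ℝ)/lam) := by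
        rw [← Real.rpow_mul (Nat.cast_nonneg N), mul_one_div, div_self hl1.ne',
          Real.rpow_one]
      have h1' : ((N:ℝ) ^ lam) ^ ((1:ℝ)/lam) < (n:ℝ) ^ ((1:ℝ)/lam) :=
        Real.rpow_lt_rpow (Real.rpow_nonneg (Nat.cast_nonneg N) lam) hlow (by positivity)
      have h2' : (n:ℝ) ^ ((1:ℝ)/lam) ≤ (n:ℝ) ^ ((e:ℕ):ℝ) :=
        Real.rpow_le_rpow_of_exponent_le hn1.le heinv
      have h3' : (n:ℝ) ^ ((e:ℕ):ℝ) = ((n ^ e : ℕ) : ℝ) := by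
        rw [Real.rpow_natCast]
        push_cast
        ring
      have hfin : (N:ℝ) < ((n ^ e : ℕ) : ℝ) := by
        calc (N:ℝ) = ((N:ℝ) ^ lam) ^ ((1:ℝ)/lam) := h0
          _ < (n:ℝ) ^ ((1:ℝ)/lam) := h1'
          _ ≤ (n:ℝ) ^ ((e:ℕ):ℝ) := h2'
          _ = ((n ^ e : ℕ) : ℝ) := h3'
      exact_mod_cast hfin
    by_cases hbig : 4 ^ (e + 1) ≤ n
    · exact approxNumber_middle h1 h2 e he1 hbig hNn
    · push_neg at hbig
      have hle1 := approxNumber_le_one h1 h2 N (n := n) (by omega)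
      refine le_trans hle1 ?_
      have hn0' : (0:ℝ) < n := by
        have : (0:ℕ) < n := by omega
        exact_mod_cast this
      have hsn : (0:ℝ) < Real.sqrt n := Real.sqrt_pos.mpr hn0'
      have hinv : (n:ℝ) ^ (-(1/2) : ℝ) = (Real.sqrt n)⁻¹ := by
        rw [Real.rpow_neg (le_of_lt hn0'), Real.sqrt_eq_rpow]
      rw [hinv]
      have hsnle : Real.sqrt n ≤ 2 ^ (e + 1) := by
        have hcast : (n:ℝ) ≤ (4:ℝ) ^ (e + 1) := by
          have : n ≤ 4 ^ (e + 1) := le_of_lt hbig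
          calc (n:ℝ) ≤ ((4 ^ (e+1) : ℕ) : ℝ) := by exact_mod_cast this
            _ = (4:ℝ) ^ (e + 1) := by push_cast; ring
        calc Real.sqrt n ≤ Real.sqrt ((4:ℝ) ^ (e + 1)) := Real.sqrt_le_sqrt hcast
          _ = 2 ^ (e + 1) := by
              rw [show (4:ℝ) ^ (e + 1) = (2 ^ (e + 1)) ^ 2 by
                  rw [show (4:ℝ) = 2 ^ 2 by norm_num, ← pow_mul, ← pow_mul, Nat.mul_comm],
                Real.sqrt_sq (by positivity)]
      rw [show (2:ℝ) ^ (e + 1) * (Real.sqrt n)⁻¹ = 2 ^ (e + 1) / Real.sqrt n from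
        (div_eq_mul_inv _ _).symm, le_div_iff₀ hsn, one_mul]
      exact hsnle
  · intro hgt
    exact approxNumber_eq_zero_of_gt h1 h2 hgt
end
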